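/- arXiv:2510.24191 — 5 statements merged into one kernel-verified Lean document; each statement's English description precedes it below -/
import Mathlib

section
/- Consider the nonlinear system x_{t+1} = f(x_t, u_t, w_t), y_t = h(x_t, u_t, w_t) and a sampling collection K generated by a bounded sequence D with bound d_max. Assume the system is sample-based exponentially i-IOSS with respect to K with parameters P1, P2 (symmetric positive definite), Q, R (positive semidefinite) and η ∈ [0,1). Let the measurement times K_s be an element of K, let the true trajectory satisfy the constraints (x_t ∈ X, w_t ∈ W, y_t ∈ Y for all t), and let the horizon M ∈ ℕ with M ≥ d_max be chosen such that ρ^M := 4 λ_max(P2,P1)² η^M < 1, defining ρ ∈ [0,1). Suppose the estimates x̂_t are generated by the sample-based MHE scheme, i.e., for every t ≥ 0 the pair (x̂*_{t−M_t|t}, ŵ*_{·|t}) is a minimizer of the MHE problem at time t and x̂_t := x̂*_{t|t}. Then the estimation error ê_t := x_t − x̂_t satisfies, for all t ≥ 0: ‖ê_t‖ ≤ 2 √(λ_max(P2,P1) λ_max(P2) / λ_min(P1)) (√ρ)^t ‖ê_0‖ + 2 √(λ_max(P2,P1) λ_max(Q) / λ_min(P1)) Σ_{j=0}^{t−1} (√ρ)^{t−j−1}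 ‖w_j‖; in particular, the sample-based MHE is robustly globally exponentially stable. -/
open scoped Classical

noncomputable section

/-- Squared weighted norm `‖v‖²_P = vᵀ P v`. -/
def normSq {k : ℕ} (P : Matrix (Fin k) (Fin k) ℝ) (v : Fin k → ℝ) : ℝ :=
  dotProduct v (P.mulVec v)

/-- Euclidean norm of a vector in `ℝ^k`. -/
def euclNorm {k : ℕ} (v : Fin k → ℝ) : ℝ := Real.sqrt (∑ i, v i ^ 2)

/-- Sampling set `K_i` generated by the sequence `d` (here `i` is zero-based, so
`sampleSet d 0` is `K_1`): its elements are `t_j^i = d_i + d_{i+1} + ⋯ + d_{i+j-1}`. -/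
def sampleSet (d : ℕ → ℕ) (i : ℕ) : Set ℕ :=
  {t | ∃ j : ℕ, t = ∑ l ∈ Finset.range (j + 1), d (i + l)}

/-- Time of the most recent available measurement strictly before time `t`
(`max {0, j ∈ Ks : j < t}`). -/
def lastMeas (Ks : Set ℕ) (t : ℕ) : ℕ := sSup (insert 0 {j | j ∈ Ks ∧ j < t})

/-- `δ_t = t − 1 − max{0, j ∈ Ks : j < t}`: time elapsed since the last measurement. -/
def delta (Ks : Set ℕ) (t : ℕ) : ℕ := t - 1 - lastMeas Ks t

/-- Time-varying horizon length `M_t = min {t, M + δ_t}`. -/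
def horizon (Ks : Set ℕ) (M t : ℕ) : ℕ := min t (M + delta Ks t)

/-- State at time `t0 + k` of the trajectory started at state `z` at time `t0` and driven by
the input `u` and disturbance `ω` through the dynamics `f`. -/
def rollout {n m q : ℕ} (f : (Fin n → ℝ) → (Fin m → ℝ) → (Fin q → ℝ) → (Fin n → ℝ))
    (u : ℕ → Fin m → ℝ) (ω : ℕ → Fin q → ℝ) (t0 : ℕ) (z : Fin n → ℝ) : ℕ → Fin n → ℝ
  | 0 => z
  | k + 1 => f (rollout f u ω t0 z k) (u (t0 + k)) (ω (t0 + k))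

/-- Feasibility of the decision variables `(z, ω)` (initial state `x̂_{t−L|t}` and
disturbance sequence) for the MHE problem at time `t` with window length `L`:
the induced state/disturbance/output sequence lies in `X`/`W`/`Y`. -/
def Feasible {n m q p : ℕ} (f : (Fin n → ℝ) → (Fin m → ℝ) → (Fin q → ℝ) → (Fin n → ℝ))
    (hout : (Fin n → ℝ) → (Fin m → ℝ) → (Fin q → ℝ) → (Fin p → ℝ))
    (X : Set (Fin n → ℝ)) (W : Set (Fin q → ℝ)) (Y : Set (Fin p → ℝ))
    (u : ℕ → Fin m → ℝ) (t L : ℕ) (z : Fin n → ℝ) (ω : ℕ → Fin q → ℝ) : Prop :=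
  (∀ k ≤ L, rollout f u ω (t - L) z k ∈ X) ∧
  (∀ k < L, ω (t - L + k) ∈ W) ∧
  (∀ k < L, hout (rollout f u ω (t - L) z k) (u (t - L + k)) (ω (t - L + k)) ∈ Y)

/-- MHE cost at time `t` with window length `L`, prior estimate `prior = x̂_{t−L}` and
measured outputs `y` (only measurements at times in `Ks` enter the output term). -/
def mheCost {n m q p : ℕ} (f : (Fin n → ℝ) → (Fin m → ℝ) → (Fin q → ℝ) → (Fin n → ℝ))
    (hout : (Fin n → ℝ) → (Fin m → ℝ) → (Fin q → ℝ) → (Fin p → ℝ))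
    (P2 : Matrix (Fin n) (Fin n) ℝ) (Q : Matrix (Fin q) (Fin q) ℝ)
    (R : Matrix (Fin p) (Fin p) ℝ) (η : ℝ) (Ks : Set ℕ)
    (u : ℕ → Fin m → ℝ) (y : ℕ → Fin p → ℝ) (prior : Fin n → ℝ)
    (t L : ℕ) (z : Fin n → ℝ) (ω : ℕ → Fin q → ℝ) : ℝ :=
  2 * η ^ L * normSq P2 (z - prior)
    + ∑ k ∈ Finset.range L, 2 * η ^ (L - k - 1) * normSq Q (ω (t - L + k))
    + ∑ k ∈ Finset.range L, Set.indicator Ks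
        (fun _ => η ^ (L - k - 1) * normSq R
          (hout (rollout f u ω (t - L) z k) (u (t - L + k)) (ω (t - L + k)) - y (t - L + k)))
        (t - L + k)

section AuxSpectral
open Matrix

lemma normSq_nonneg {k : ℕ} {P : Matrix (Fin k) (Fin k) ℝ} (hP : P.PosSemidef)
    (v : Fin k → ℝ) : 0 ≤ normSq P v := by
  have := hP.dotProduct_mulVec_nonneg v; simpa [normSq] using this

lemma normSq_neg {k : ℕ} (P : Matrix (Fin k) (Fin k) ℝ) (v : Fin k → ℝ) :
    normSq P (-v) = normSq P v := by
  simp [normSq, Matrix.mulVec_neg]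

lemma normSq_sub_comm {k : ℕ} (P : Matrix (Fin k) (Fin k) ℝ) (a b : Fin k → ℝ) :
    normSq P (a - b) = normSq P (b - a) := by
  rw [← normSq_neg]; congr 1; abel

lemma normSq_add_sub {k : ℕ} (P : Matrix (Fin k) (Fin k) ℝ) (a b : Fin k → ℝ) :
    normSq P (a + b) + normSq P (a - b) = 2 * normSq P a + 2 * normSq P b := by
  simp only [normSq, Matrix.mulVec_add, Matrix.mulVec_sub, add_dotProduct,
    sub_dotProduct, dotProduct_add, dotProduct_sub]
  ring

lemma normSq_add_le {k : ℕ} {P : Matrix (Fin k) (Fin k) ℝ} (hP : P.PosSemidef)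
    (a b : Fin k → ℝ) : normSq P (a + b) ≤ 2 * normSq P a + 2 * normSq P b := by
  have h := normSq_add_sub P a b
  have := normSq_nonneg hP (a - b)
  linarith

lemma herm_repr {k : ℕ} {A : Matrix (Fin k) (Fin k) ℝ} (hA : A.IsHermitian) :
    ∃ (ev : Fin k → ℝ) (U : Matrix (Fin k) (Fin k) ℝ),
      U * star U = 1 ∧ star U * U = 1 ∧ A = U * diagonal ev * star U := by
  refine ⟨hA.eigenvalues, (hA.eigenvectorUnitary : Matrix (Fin k) (Fin k) ℝ),
    (Matrix.mem_unitaryGroup_iff).1 hA.eigenvectorUnitary.2,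
    Matrix.UnitaryGroup.star_mul_self _, ?_⟩
  have := hA.spectral_theorem
  simpa using this

lemma det_sub_smul_eq_prod {k : ℕ} (ev : Fin k → ℝ) (U : Matrix (Fin k) (Fin k) ℝ)
    (hUU : U * star U = 1) (hUU' : star U * U = 1) (l : ℝ) :
    (U * diagonal ev * star U - l • (1 : Matrix (Fin k) (Fin k) ℝ)).det
      = ∏ i, (ev i - l) := by
  have key : U * diagonal ev * star U - l • (1 : Matrix (Fin k) (Fin k) ℝ)
      = U * (diagonal (fun i => ev i - l)) * star U := by
    have h1 : diagonal (fun i => ev i - l)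
        = diagonal ev - l • (1 : Matrix (Fin k) (Fin k) ℝ) := by
      rw [Matrix.smul_one_eq_diagonal, ← Matrix.diagonal_sub]
    rw [h1, Matrix.mul_sub, Matrix.sub_mul]
    congr 1
    rw [Matrix.mul_smul, Matrix.mul_one, Matrix.smul_mul, hUU]
  rw [key, Matrix.det_mul, Matrix.det_mul, mul_comm, ← mul_assoc, ← Matrix.det_mul, hUU',
    Matrix.det_one, one_mul, Matrix.det_diagonal]

lemma quadform_repr {k : ℕ} (ev : Fin k → ℝ) (U : Matrix (Fin k) (Fin k) ℝ)
    (hUU : U * star U = 1) (x : Fin k → ℝ) :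
    ∃ w : Fin k → ℝ,
      (x ⬝ᵥ (U * diagonal ev * star U) *ᵥ x = ∑ i, ev i * (w i)^2) ∧ (x ⬝ᵥ x = ∑ i, (w i)^2) := by
  have hstar : star U = Uᵀ := by
    simp [Matrix.star_eq_conjTranspose, Matrix.conjTranspose_eq_transpose_of_trivial]
  refine ⟨Uᵀ *ᵥ x, ?_, ?_⟩
  · have hvm : x ᵥ* U = Uᵀ *ᵥ x := by
      conv_lhs => rw [← Matrix.transpose_transpose U]
      rw [Matrix.vecMul_transpose]
    rw [hstar, ← Matrix.mulVec_mulVec, ← Matrix.mulVec_mulVec,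
      Matrix.dotProduct_mulVec x U, hvm]
    simp only [dotProduct, Matrix.mulVec_diagonal]
    try exact Finset.sum_congr rfl (fun i _ => by ring)
  · have h2 : (Uᵀ *ᵥ x) ⬝ᵥ (Uᵀ *ᵥ x) = x ⬝ᵥ x := by
      rw [Matrix.dotProduct_mulVec _ Uᵀ, Matrix.vecMul_transpose, Matrix.mulVec_mulVec, ← hstar,
        hUU, Matrix.one_mulVec]
      try exact dotProduct_comm _ _
    rw [← h2]
    simp only [dotProduct]
    exact Finset.sum_congr rfl (fun i _ => by ring)

lemma quadform_le_of_isGreatest {k : ℕ} {A : Matrix (Fin k) (Fin k) ℝ} (hA : A.IsHermitian)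
    {lam : ℝ} (h : IsGreatest {l : ℝ | (A - l • (1 : Matrix (Fin k) (Fin k) ℝ)).det = 0} lam)
    (x : Fin k → ℝ) : x ⬝ᵥ A *ᵥ x ≤ lam * (x ⬝ᵥ x) := by
  obtain ⟨ev, U, hUU, hUU', hspec⟩ := herm_repr hA
  have hev : ∀ i, ev i ≤ lam := by
    intro i
    refine h.2 ?_
    show (A - _).det = 0
    rw [hspec, det_sub_smul_eq_prod ev U hUU hUU']
    exact Finset.prod_eq_zero (Finset.mem_univ i) (by ring)
  obtain ⟨w, hq, hn⟩ := quadform_repr ev U hUU x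
  rw [← hspec] at hq
  rw [hq, hn, Finset.mul_sum]
  exact Finset.sum_le_sum fun i _ => mul_le_mul_of_nonneg_right (hev i) (sq_nonneg _)

lemma quadform_ge_of_isLeast {k : ℕ} {A : Matrix (Fin k) (Fin k) ℝ} (hA : A.IsHermitian)
    {lam : ℝ} (h : IsLeast {l : ℝ | (A - l • (1 : Matrix (Fin k) (Fin k) ℝ)).det = 0} lam)
    (x : Fin k → ℝ) : lam * (x ⬝ᵥ x) ≤ x ⬝ᵥ A *ᵥ x := by
  obtain ⟨ev, U, hUU, hUU', hspec⟩ := herm_repr hA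
  have hev : ∀ i, lam ≤ ev i := by
    intro i
    refine h.2 ?_
    show (A - _).det = 0
    rw [hspec, det_sub_smul_eq_prod ev U hUU hUU']
    exact Finset.prod_eq_zero (Finset.mem_univ i) (by ring)
  obtain ⟨w, hq, hn⟩ := quadform_repr ev U hUU x
  rw [← hspec] at hq
  rw [hq, hn, Finset.mul_sum]
  exact Finset.sum_le_sum fun i _ => mul_le_mul_of_nonneg_right (hev i) (sq_nonneg _)

/-- From membership in the root set, produce a "generalized eigenvector". -/
lemma exists_vec_of_det_zero {k : ℕ} {B : Matrix (Fin k) (Fin k) ℝ} (h : B.det = 0) :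
    ∃ v : Fin k → ℝ, v ≠ 0 ∧ B *ᵥ v = 0 := by
  obtain ⟨v, hv, hv0⟩ := (Matrix.exists_mulVec_eq_zero_iff).2 h
  exact ⟨v, hv, hv0⟩

lemma transpose_eq_of_herm {k : ℕ} {S : Matrix (Fin k) (Fin k) ℝ} (h : S.IsHermitian) :
    Sᵀ = S := by
  have := h
  unfold Matrix.IsHermitian at this
  rwa [Matrix.conjTranspose_eq_transpose_of_trivial] at this

open scoped MatrixOrder in
/-- Generalized eigenvalue bound: `vᵀ P2 v ≤ λ_max(P2,P1) vᵀ P1 v`. -/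
lemma normSq_le_genEig {k : ℕ} {P1 P2 : Matrix (Fin k) (Fin k) ℝ}
    (hP1 : P1.PosDef) (hP2 : P2.IsHermitian) {lam : ℝ}
    (hlam : IsGreatest {l : ℝ | (P2 - l • P1).det = 0} lam) (v : Fin k → ℝ) :
    normSq P2 v ≤ lam * normSq P1 v := by
  set S := CFC.sqrt P1 with hSdef
  have hSS : S * S = P1 := CFC.sqrt_mul_sqrt_self P1 hP1.posSemidef.nonneg
  have hSherm : S.IsHermitian := (Matrix.nonneg_iff_posSemidef.1 (CFC.sqrt_nonneg P1)).1
  have hSt : Sᵀ = S := transpose_eq_of_herm hSherm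
  have hdetS : IsUnit S.det := by
    have hdP1 : P1.det ≠ 0 := ne_of_gt hP1.det_pos
    have : S.det * S.det = P1.det := by rw [← Matrix.det_mul, hSS]
    have hS0 : S.det ≠ 0 := by
      intro h0; rw [h0, mul_zero] at this; exact hdP1 this.symm
    exact isUnit_iff_ne_zero.2 hS0
  have hSi : S * S⁻¹ = 1 := Matrix.mul_nonsing_inv S hdetS
  have hiS : S⁻¹ * S = 1 := Matrix.nonsing_inv_mul S hdetS
  set A := S⁻¹ * P2 * S⁻¹ with hAdef
  have hSAS : S * A * S = P2 := by
    rw [hAdef]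
    calc S * (S⁻¹ * P2 * S⁻¹) * S = (S * S⁻¹) * P2 * (S⁻¹ * S) := by
          simp only [Matrix.mul_assoc]
      _ = P2 := by rw [hSi, hiS, Matrix.one_mul, Matrix.mul_one]
  have hfact : ∀ l : ℝ, P2 - l • P1 = S * (A - l • (1 : Matrix (Fin k) (Fin k) ℝ)) * S := by
    intro l
    rw [Matrix.mul_sub, Matrix.sub_mul, hSAS]
    congr 1
    rw [Matrix.mul_smul, Matrix.mul_one, Matrix.smul_mul, hSS]
  have hAherm : A.IsHermitian := by
    have hi : (S⁻¹).IsHermitian := hSherm.inv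
    show Aᴴ = A
    rw [hAdef, Matrix.conjTranspose_mul, Matrix.conjTranspose_mul, hi.eq, hP2.eq]
    rw [Matrix.mul_assoc]
  have hsets : {l : ℝ | (A - l • (1 : Matrix (Fin k) (Fin k) ℝ)).det = 0}
      = {l : ℝ | (P2 - l • P1).det = 0} := by
    ext l
    simp only [Set.mem_setOf_eq, hfact l, Matrix.det_mul]
    constructor
    · intro h; rw [h]; ring
    · intro h
      rcases mul_eq_zero.1 h with h1 | h1
      · rcases mul_eq_zero.1 h1 with h2 | h2
        · exact absurd h2 hdetS.ne_zero
        · exact h2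
      · exact absurd h1 hdetS.ne_zero
  have hlam' : IsGreatest {l : ℝ | (A - l • (1 : Matrix (Fin k) (Fin k) ℝ)).det = 0} lam := by
    rw [hsets]; exact hlam
  have hq := quadform_le_of_isGreatest hAherm hlam' (S *ᵥ v)
  have hswap : ∀ z, v ⬝ᵥ S *ᵥ z = (S *ᵥ v) ⬝ᵥ z := by
    intro z
    rw [Matrix.dotProduct_mulVec]
    congr 1
    conv_lhs => rw [← hSt]
    rw [Matrix.vecMul_transpose]
  have hkey : ∀ (T : Matrix (Fin k) (Fin k) ℝ) (z : Fin k → ℝ), (S *ᵥ v) ⬝ᵥ T *ᵥ (S *ᵥ v)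
      = v ⬝ᵥ (S * T * S) *ᵥ v := by
    intro T z
    calc (S *ᵥ v) ⬝ᵥ T *ᵥ (S *ᵥ v) = (S *ᵥ v) ⬝ᵥ (T * S) *ᵥ v := by rw [Matrix.mulVec_mulVec]
      _ = v ⬝ᵥ S *ᵥ ((T * S) *ᵥ v) := (hswap _).symm
      _ = v ⬝ᵥ (S * (T * S)) *ᵥ v := by rw [Matrix.mulVec_mulVec]
      _ = v ⬝ᵥ (S * T * S) *ᵥ v := by rw [Matrix.mul_assoc]
  have h1 : (S *ᵥ v) ⬝ᵥ A *ᵥ (S *ᵥ v) = normSq P2 v := by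
    rw [hkey A v, hSAS]; rfl
  have h2 : (S *ᵥ v) ⬝ᵥ (S *ᵥ v) = normSq P1 v := by
    have : (S *ᵥ v) ⬝ᵥ (S *ᵥ v) = (S *ᵥ v) ⬝ᵥ (1 : Matrix (Fin k) (Fin k) ℝ) *ᵥ (S *ᵥ v) := by
      rw [Matrix.one_mulVec]
    rw [this, hkey 1 v, Matrix.mul_one, hSS]; rfl
  rw [← h1, ← h2]
  exact hq

lemma dotProduct_self_eq_sum_sq {k : ℕ} (v : Fin k → ℝ) : v ⬝ᵥ v = ∑ i, v i ^ 2 := by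
  simp [dotProduct, sq]

lemma normSq_le_lamMax {k : ℕ} {P : Matrix (Fin k) (Fin k) ℝ} (hP : P.IsHermitian)
    {lam : ℝ} (h : IsGreatest {l : ℝ | (P - l • (1 : Matrix (Fin k) (Fin k) ℝ)).det = 0} lam)
    (v : Fin k → ℝ) : normSq P v ≤ lam * ∑ i, v i ^ 2 := by
  have := quadform_le_of_isGreatest hP h v
  rwa [dotProduct_self_eq_sum_sq] at this

lemma normSq_ge_lamMin {k : ℕ} {P : Matrix (Fin k) (Fin k) ℝ} (hP : P.IsHermitian)
    {lam : ℝ} (h : IsLeast {l : ℝ | (P - l • (1 : Matrix (Fin k) (Fin k) ℝ)).det = 0} lam)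
    (v : Fin k → ℝ) : lam * ∑ i, v i ^ 2 ≤ normSq P v := by
  have := quadform_ge_of_isLeast hP h v
  rwa [dotProduct_self_eq_sum_sq] at this

/-- a matrix in the root set has a generalized eigenvector pair identity -/
lemma genEig_pair {k : ℕ} {P1 P2 : Matrix (Fin k) (Fin k) ℝ} {lam : ℝ}
    (h : (P2 - lam • P1).det = 0) :
    ∃ v : Fin k → ℝ, v ≠ 0 ∧ normSq P2 v = lam * normSq P1 v := by
  obtain ⟨v, hv, hv0⟩ := exists_vec_of_det_zero h
  refine ⟨v, hv, ?_⟩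
  have : P2 *ᵥ v = lam • (P1 *ᵥ v) := by
    have := sub_eq_zero.2 (congrArg id hv0)
    rw [Matrix.sub_mulVec, Matrix.smul_mulVec] at hv0
    have h2 := sub_eq_zero.1 hv0
    exact h2
  unfold normSq
  rw [this, dotProduct_smul]
  simp [smul_eq_mul]

/-! ### Sampling-set combinatorics -/

/-- partial sums `s_c = d_i + ⋯ + d_{i+c}` -/
def psum (d : ℕ → ℕ) (i c : ℕ) : ℕ := ∑ l ∈ Finset.range (c + 1), d (i + l)

lemma psum_mem (d : ℕ → ℕ) (i c : ℕ) : psum d i c ∈ sampleSet d i := ⟨c, rfl⟩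

lemma psum_mono (d : ℕ → ℕ) (i : ℕ) : Monotone (psum d i) := by
  intro a b hab
  exact Finset.sum_le_sum_of_subset (Finset.range_subset_range.2 (by omega))

lemma psum_succ (d : ℕ → ℕ) (i c : ℕ) : psum d i (c + 1) = psum d i c + d (i + (c + 1)) := by
  unfold psum
  rw [Finset.sum_range_succ]

lemma psum_split (d : ℕ → ℕ) (i c j : ℕ) :
    psum d i (c + 1 + j) = psum d i c + psum d (i + c + 1) j := by
  unfold psum
  have h : c + 1 + j + 1 = (c + 1) + (j + 1) := by omega
  rw [h, Finset.sum_range_add]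
  congr 1
  refine Finset.sum_congr rfl fun l _ => ?_
  congr 1
  omega

lemma le_of_mem_sampleSet {d : ℕ → ℕ} {i j : ℕ} (h : j ∈ sampleSet d i) : d i ≤ j := by
  obtain ⟨c, rfl⟩ := h
  have : d (i + 0) ≤ ∑ l ∈ Finset.range (c + 1), d (i + l) :=
    Finset.single_le_sum (f := fun l => d (i + l)) (fun l _ => Nat.zero_le _)
      (Finset.mem_range.2 (by omega))
  simpa using this

lemma lastMeas_bddAbove (Ks : Set ℕ) (t : ℕ) :
    BddAbove (insert 0 {j | j ∈ Ks ∧ j < t}) := by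
  refine ⟨t, ?_⟩
  rintro j (rfl | ⟨_, hj⟩)
  · exact Nat.zero_le _
  · exact le_of_lt hj

lemma lastMeas_lt (Ks : Set ℕ) {t : ℕ} (ht : 1 ≤ t) : lastMeas Ks t < t := by
  have : lastMeas Ks t ≤ t - 1 := by
    refine csSup_le ⟨0, Set.mem_insert _ _⟩ ?_
    rintro j (rfl | ⟨_, hj⟩)
    · omega
    · omega
  omega

lemma lastMeas_mem {Ks : Set ℕ} {t : ℕ} (h : lastMeas Ks t ≠ 0) :
    lastMeas Ks t ∈ Ks ∧ lastMeas Ks t < t := by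
  have hmem : lastMeas Ks t ∈ insert 0 {j | j ∈ Ks ∧ j < t} :=
    Nat.sSup_mem ⟨0, Set.mem_insert _ _⟩ (lastMeas_bddAbove Ks t)
  rcases hmem with h0 | hS
  · exact absurd h0 h
  · exact hS

/-- Structure of the measurement times in the "contraction" case `M + δ_t < t`. -/
lemma step_struct (d : ℕ → ℕ) (i0 : ℕ) (Ks : Set ℕ) (hKs : Ks = sampleSet d i0)
    (M t : ℕ) (hM1 : 1 ≤ M) (hlt : M + delta Ks t < t) :
    ∃ (μ c : ℕ),
      horizon Ks M t = M + delta Ks t ∧ 1 ≤ t - horizon Ks M t ∧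
      t - horizon Ks M t ≤ μ ∧ μ < t ∧
      (∀ j ∈ sampleSet d (i0 + c), ¬ j < μ - (t - horizon Ks M t)) ∧
      (∀ j ∈ sampleSet d (i0 + c + 1), μ + j ∈ Ks) := by
  have ht1 : 1 ≤ t := by omega
  set ℓ := lastMeas Ks t with hℓ
  have hℓt : ℓ < t := lastMeas_lt Ks ht1
  have hδ : delta Ks t = t - 1 - ℓ := rfl
  have hhor : horizon Ks M t = M + delta Ks t := by
    unfold horizon; omega
  set τ := t - horizon Ks M t with hτ
  have hτ1 : 1 ≤ τ := by omega
  have hτM : τ + M = ℓ + 1 := by omega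
  have hℓ1 : 1 ≤ ℓ := by omega
  have hℓKs : ℓ ∈ Ks := (lastMeas_mem (by omega)).1
  rw [hKs] at hℓKs
  obtain ⟨j0, hj0⟩ := hℓKs
  have hτℓ : τ ≤ ℓ := by omega
  have hex : ∃ c, τ ≤ psum d i0 c := ⟨j0, by unfold psum; omega⟩
  classical
  obtain ⟨c, hcτ, hcmin⟩ : ∃ c, (τ ≤ psum d i0 c) ∧ ∀ c', c' < c → ¬ τ ≤ psum d i0 c' :=
    ⟨Nat.find hex, Nat.find_spec hex, fun c' h => Nat.find_min hex h⟩
  have hcj0 : c ≤ j0 := by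
    by_contra hcon
    exact hcmin j0 (by omega) (by unfold psum; omega)
  have hμℓ : psum d i0 c ≤ ℓ := by
    have := psum_mono d i0 hcj0
    unfold psum at this ⊢
    omega
  refine ⟨psum d i0 c, c, hhor, hτ1, hcτ, by omega, ?_, ?_⟩
  · intro j hj
    have hdij : d (i0 + c) ≤ j := le_of_mem_sampleSet hj
    rcases Nat.eq_zero_or_pos c with hc0 | hcpos
    · subst hc0
      have h0 : psum d i0 0 = d (i0 + 0) := by unfold psum; simp
      simp only [Nat.add_zero] at h0 hdij
      omega
    · obtain ⟨c', rfl⟩ : ∃ c', c = c' + 1 := ⟨c - 1, by omega⟩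
      have hmin : ¬ τ ≤ psum d i0 c' := hcmin c' (by omega)
      have hsucc : psum d i0 (c' + 1) = psum d i0 c' + d (i0 + (c' + 1)) :=
        psum_succ d i0 c'
      omega
  · intro j hj
    obtain ⟨j', hj'⟩ := hj
    rw [hKs]
    have hkey : psum d i0 c + j = psum d i0 (c + 1 + j') := by
      rw [psum_split d i0 c j']
      congr 1
      try rw [hj']
    rw [hkey]
    exact psum_mem d i0 _

/-! ### Trajectory lemmas -/

lemma rollout_congr {n m q : ℕ} (f : (Fin n → ℝ) → (Fin m → ℝ) → (Fin q → ℝ) → (Fin n → ℝ))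
    (u : ℕ → Fin m → ℝ) (ω₁ ω₂ : ℕ → Fin q → ℝ) (t0 : ℕ) (z : Fin n → ℝ) (k : ℕ)
    (h : ∀ j, t0 ≤ j → j < t0 + k → ω₁ j = ω₂ j) :
    rollout f u ω₁ t0 z k = rollout f u ω₂ t0 z k := by
  induction k with
  | zero => rfl
  | succ k ih =>
    show f _ _ _ = f _ _ _
    rw [ih (fun j h1 h2 => h j h1 (by omega)), h (t0 + k) (by omega) (by omega)]

lemma rollout_true {n m q : ℕ} (f : (Fin n → ℝ) → (Fin m → ℝ) → (Fin q → ℝ) → (Fin n → ℝ))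
    (u : ℕ → Fin m → ℝ) (w : ℕ → Fin q → ℝ) (x : ℕ → Fin n → ℝ)
    (hxdyn : ∀ t, x (t + 1) = f (x t) (u t) (w t)) (t0 k : ℕ) :
    rollout f u w t0 (x t0) k = x (t0 + k) := by
  induction k with
  | zero => rfl
  | succ k ih =>
    show f _ _ _ = _
    rw [ih, ← hxdyn (t0 + k)]
    congr 1

/-! ### Square-root estimates -/

lemma sqrt_add_le (a b : ℝ) (ha : 0 ≤ a) (hb : 0 ≤ b) :
    Real.sqrt (a + b) ≤ Real.sqrt a + Real.sqrt b := by
  have h : a + b ≤ (Real.sqrt a + Real.sqrt b) ^ 2 := by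
    have h2 : (Real.sqrt a + Real.sqrt b) ^ 2
        = a + b + 2 * (Real.sqrt a * Real.sqrt b) := by
      have ha2 := Real.sq_sqrt ha
      have hb2 := Real.sq_sqrt hb
      ring_nf
      nlinarith [Real.sq_sqrt ha, Real.sq_sqrt hb]
    nlinarith [mul_nonneg (Real.sqrt_nonneg a) (Real.sqrt_nonneg b)]
  calc Real.sqrt (a + b) ≤ Real.sqrt ((Real.sqrt a + Real.sqrt b) ^ 2) := Real.sqrt_le_sqrt h
    _ = Real.sqrt a + Real.sqrt b := by
        rw [Real.sqrt_sq (by positivity)]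

lemma sqrt_sum_le {s : Finset ℕ} (f : ℕ → ℝ) (hf : ∀ i ∈ s, 0 ≤ f i) :
    Real.sqrt (∑ i ∈ s, f i) ≤ ∑ i ∈ s, Real.sqrt (f i) := by
  induction s using Finset.cons_induction with
  | empty => simp
  | cons a s ha ih =>
    rw [Finset.sum_cons, Finset.sum_cons]
    calc Real.sqrt (f a + ∑ i ∈ s, f i)
        ≤ Real.sqrt (f a) + Real.sqrt (∑ i ∈ s, f i) :=
          sqrt_add_le _ _ (hf a (Finset.mem_cons_self a s))
            (Finset.sum_nonneg fun i hi => hf i (Finset.mem_cons_of_mem hi))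
      _ ≤ _ := by
          have := ih (fun i hi => hf i (Finset.mem_cons_of_mem hi))
          linarith

lemma sqrt_pow_eq (ρ : ℝ) (hρ : 0 ≤ ρ) (t : ℕ) :
    Real.sqrt (ρ ^ t) = Real.sqrt ρ ^ t := by
  have : ρ ^ t = (Real.sqrt ρ ^ t) * (Real.sqrt ρ ^ t) := by
    rw [← mul_pow, Real.mul_self_sqrt hρ]
  rw [this, Real.sqrt_mul_self (by positivity)]

lemma normSq_zero {k : ℕ} (P : Matrix (Fin k) (Fin k) ℝ) : normSq P 0 = 0 := by
  simp [normSq]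


lemma rollout_succ {n m q : ℕ} (f : (Fin n → ℝ) → (Fin m → ℝ) → (Fin q → ℝ) → (Fin n → ℝ))
    (u : ℕ → Fin m → ℝ) (ω : ℕ → Fin q → ℝ) (t0 : ℕ) (z : Fin n → ℝ) (k : ℕ) :
    rollout f u ω t0 z (k + 1) = f (rollout f u ω t0 z k) (u (t0 + k)) (ω (t0 + k)) := rfl

set_option maxHeartbeats 1000000 in
/-- The key one-window contraction estimate for the sample-based MHE. -/
lemma key_bound {n m q p : ℕ}
    (f : (Fin n → ℝ) → (Fin m → ℝ) → (Fin q → ℝ) → (Fin n → ℝ))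
    (hout : (Fin n → ℝ) → (Fin m → ℝ) → (Fin q → ℝ) → (Fin p → ℝ))
    (X : Set (Fin n → ℝ)) (W : Set (Fin q → ℝ)) (Y : Set (Fin p → ℝ))
    (d : ℕ → ℕ)
    (P1 P2 : Matrix (Fin n) (Fin n) ℝ) (Q : Matrix (Fin q) (Fin q) ℝ)
    (R : Matrix (Fin p) (Fin p) ℝ) (η : ℝ)
    (hP1 : P1.PosDef) (hP2 : P2.PosDef) (hQ : Q.PosSemidef) (hR : R.PosSemidef)
    (hη0 : 0 ≤ η)
    (hIOSS : ∀ (xa xb : ℕ → Fin n → ℝ) (ua : ℕ → Fin m → ℝ) (wa wb : ℕ → Fin q → ℝ),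
      (∀ t, wa t ∈ W) → (∀ t, wb t ∈ W) →
      (∀ t, xa (t + 1) = f (xa t) (ua t) (wa t)) →
      (∀ t, xb (t + 1) = f (xb t) (ua t) (wb t)) →
      ∀ t i : ℕ,
        normSq P1 (xa t - xb t) ≤
          η ^ t * normSq P2 (xa 0 - xb 0)
          + ∑ j ∈ Finset.range t, η ^ (t - j - 1) * normSq Q (wa j - wb j)
          + ∑ j ∈ Finset.range t, Set.indicator (sampleSet d i)
              (fun j => η ^ (t - j - 1) *
                normSq R (hout (xa j) (ua j) (wa j) - hout (xb j) (ua j) (wb j))) j)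
    (Ks : Set ℕ) (i0 : ℕ) (hKs : Ks = sampleSet d i0)
    (u : ℕ → Fin m → ℝ) (w : ℕ → Fin q → ℝ) (x : ℕ → Fin n → ℝ) (y : ℕ → Fin p → ℝ)
    (hxdyn : ∀ t, x (t + 1) = f (x t) (u t) (w t))
    (hy : ∀ t, y t = hout (x t) (u t) (w t))
    (hxX : ∀ t, x t ∈ X) (hwW : ∀ t, w t ∈ W) (hyY : ∀ t, y t ∈ Y)
    (M : ℕ) (hM1 : 1 ≤ M)
    (lam21 : ℝ) (hlam1 : 1 ≤ lam21)
    (hgen : ∀ v : Fin n → ℝ, normSq P2 v ≤ lam21 * normSq P1 v)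
    (zstar : ℕ → Fin n → ℝ) (ωstar : ℕ → ℕ → Fin q → ℝ) (xhat : ℕ → Fin n → ℝ)
    (hfeas : ∀ t, Feasible f hout X W Y u t (horizon Ks M t) (zstar t) (ωstar t))
    (hopt : ∀ t (z' : Fin n → ℝ) (ω' : ℕ → Fin q → ℝ),
      Feasible f hout X W Y u t (horizon Ks M t) z' ω' →
      mheCost f hout P2 Q R η Ks u y (xhat (t - horizon Ks M t)) t (horizon Ks M t)
          (zstar t) (ωstar t)
        ≤ mheCost f hout P2 Q R η Ks u y (xhat (t - horizon Ks M t)) t (horizon Ks M t) z' ω')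
    (hxhat : ∀ t, xhat t = rollout f u (ωstar t) (t - horizon Ks M t) (zstar t) (horizon Ks M t)) :
    ∀ t, normSq P1 (x t - xhat t) ≤
      4 * lam21 * (η ^ (horizon Ks M t) *
          normSq P2 (x (t - horizon Ks M t) - xhat (t - horizon Ks M t))
        + ∑ k ∈ Finset.range (horizon Ks M t),
            η ^ (horizon Ks M t - k - 1) * normSq Q (w (t - horizon Ks M t + k))) := by
  intro t
  have hfeas_t := hfeas t
  have hopt_t := hopt t
  have hxhat_t := hxhat t
  set L := horizon Ks M t with hLdef
  have hLle : L ≤ t := min_le_left _ _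
  classical
  -- modified disturbance sequence: the optimal one inside the window, the true one outside
  set ω'' : ℕ → Fin q → ℝ := fun j => if t - L ≤ j ∧ j < t then ωstar t j else w j with hω''def
  have hω''eq : ∀ j, t - L ≤ j → j < t → ω'' j = ωstar t j := by
    intro j h1 h2
    simp only [hω''def]
    rw [if_pos ⟨h1, h2⟩]
  have hω''W : ∀ j, ω'' j ∈ W := by
    intro j
    by_cases h : t - L ≤ j ∧ j < t
    · rw [hω''def]
      simp only [if_pos h]
      have hk := hfeas_t.2.1 (j - (t - L)) (by omega)
      have he : t - L + (j - (t - L)) = j := by omega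
      rwa [he] at hk
    · rw [hω''def]; simp only [if_neg h]; exact hwW j
  -- the optimal estimated trajectory over the window
  set xb : ℕ → Fin n → ℝ := fun k => rollout f u ω'' (t - L) (zstar t) k with hxbdef
  have hxb_eq : ∀ k, k ≤ L → xb k = rollout f u (ωstar t) (t - L) (zstar t) k := by
    intro k hk
    exact rollout_congr f u ω'' (ωstar t) (t - L) (zstar t) k
      (fun j h1 h2 => hω''eq j h1 (by omega))
  have hxbL : xb L = xhat t := by rw [hxb_eq L le_rfl, hxhat_t]
  have hxb0 : xb 0 = zstar t := rfl
  -- the true trajectory is feasible for the MHE problem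
  have hfeas_true : Feasible f hout X W Y u t L (x (t - L)) w := by
    refine ⟨fun k _ => ?_, fun k _ => hwW _, fun k hk => ?_⟩
    · rw [rollout_true f u w x hxdyn (t - L) k]
      exact hxX _
    · rw [rollout_true f u w x hxdyn (t - L) k, ← hy]
      exact hyY _
  have hJle := hopt_t (x (t - L)) w hfeas_true
  -- value of the true candidate's cost
  have hJtrue : mheCost f hout P2 Q R η Ks u y (xhat (t - L)) t L (x (t - L)) w
      = 2 * η ^ L * normSq P2 (x (t - L) - xhat (t - L))
        + ∑ k ∈ Finset.range L, 2 * η ^ (L - k - 1) * normSq Q (w (t - L + k)) := by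
    unfold mheCost
    have hz : ∀ k ∈ Finset.range L, Set.indicator Ks
        (fun _ => η ^ (L - k - 1) * normSq R
          (hout (rollout f u w (t - L) (x (t - L)) k) (u (t - L + k)) (w (t - L + k))
            - y (t - L + k))) (t - L + k) = 0 := by
      intro k _
      have h2 : hout (rollout f u w (t - L) (x (t - L)) k) (u (t - L + k)) (w (t - L + k))
          - y (t - L + k) = 0 := by
        rw [rollout_true f u w x hxdyn (t - L) k, hy (t - L + k), sub_self]
      rw [h2]
      simp [Set.indicator_apply, normSq_zero]
    rw [Finset.sum_eq_zero hz, add_zero]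
  -- abbreviations for the three pieces of the i-IOSS bound
  set A : ℝ := normSq P2 (x (t - L) - zstar t) with hAdef
  set QS : ℝ := ∑ k ∈ Finset.range L, η ^ (L - k - 1) * normSq Q (w (t - L + k) - ω'' (t - L + k))
    with hQSdef
  set YS : ℝ := ∑ k ∈ Finset.range L, Set.indicator Ks
      (fun _ => η ^ (L - k - 1) *
        normSq R (y (t - L + k) - hout (xb k) (u (t - L + k)) (ω'' (t - L + k)))) (t - L + k)
    with hYSdef
  have hYSnn : 0 ≤ YS := by
    refine Finset.sum_nonneg fun k _ => Set.indicator_nonneg (fun _ _ => ?_) _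
    exact mul_nonneg (pow_nonneg hη0 _) (normSq_nonneg hR _)
  have hQSnn : 0 ≤ QS := by
    refine Finset.sum_nonneg fun k _ => mul_nonneg (pow_nonneg hη0 _) (normSq_nonneg hQ _)
  have hAnn : 0 ≤ A := normSq_nonneg hP2.posSemidef _
  have hηL : (0:ℝ) ≤ η ^ L := pow_nonneg hη0 L
  -- step 1: bound the deterministic quantity via optimality
  have hEb : η ^ L * A + QS + YS
      ≤ 4 * (η ^ L * normSq P2 (x (t - L) - xhat (t - L))
          + ∑ k ∈ Finset.range L, η ^ (L - k - 1) * normSq Q (w (t - L + k))) := by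
    have hA2 : η ^ L * A ≤ 2 * (η ^ L * normSq P2 (x (t - L) - xhat (t - L)))
        + 2 * (η ^ L * normSq P2 (zstar t - xhat (t - L))) := by
      have h1 := normSq_add_le hP2.posSemidef (x (t - L) - xhat (t - L)) (xhat (t - L) - zstar t)
      have h2 : (x (t - L) - xhat (t - L)) + (xhat (t - L) - zstar t) = x (t - L) - zstar t := by
        abel
      rw [h2, normSq_sub_comm P2 (xhat (t - L)) (zstar t)] at h1
      calc η ^ L * A ≤ η ^ L * (2 * normSq P2 (x (t - L) - xhat (t - L))
            + 2 * normSq P2 (zstar t - xhat (t - L))) :=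
          mul_le_mul_of_nonneg_left h1 hηL
        _ = _ := by ring
    have hQs : QS ≤ (∑ k ∈ Finset.range L, 2 * η ^ (L - k - 1) * normSq Q (w (t - L + k)))
        + (∑ k ∈ Finset.range L, 2 * η ^ (L - k - 1) * normSq Q (ωstar t (t - L + k))) := by
      rw [hQSdef, ← Finset.sum_add_distrib]
      refine Finset.sum_le_sum fun k hk => ?_
      have hkL : k < L := Finset.mem_range.1 hk
      have h1 := normSq_add_le hQ (w (t - L + k)) (-(ωstar t (t - L + k)))
      rw [normSq_neg, ← sub_eq_add_neg] at h1
      rw [hω''eq (t - L + k) (by omega) (by omega)]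
      calc η ^ (L - k - 1) * normSq Q (w (t - L + k) - ωstar t (t - L + k))
          ≤ η ^ (L - k - 1) * (2 * normSq Q (w (t - L + k))
              + 2 * normSq Q (ωstar t (t - L + k))) :=
            mul_le_mul_of_nonneg_left h1 (pow_nonneg hη0 _)
        _ = _ := by ring
    have hYeq : YS = ∑ k ∈ Finset.range L, Set.indicator Ks
        (fun _ => η ^ (L - k - 1) * normSq R
          (hout (rollout f u (ωstar t) (t - L) (zstar t) k) (u (t - L + k))
            (ωstar t (t - L + k)) - y (t - L + k))) (t - L + k) := by
      rw [hYSdef]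
      refine Finset.sum_congr rfl fun k hk => ?_
      have hkL : k < L := Finset.mem_range.1 hk
      rw [← hxb_eq k hkL.le, ← hω''eq (t - L + k) (by omega) (by omega)]
      simp only [Set.indicator_apply]
      split_ifs with hmem
      · rw [normSq_sub_comm]
      · rfl
    have hJz : mheCost f hout P2 Q R η Ks u y (xhat (t - L)) t L (zstar t) (ωstar t)
        = 2 * η ^ L * normSq P2 (zstar t - xhat (t - L))
          + (∑ k ∈ Finset.range L, 2 * η ^ (L - k - 1) * normSq Q (ωstar t (t - L + k)))
          + YS := by
      unfold mheCost
      rw [hYeq]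
    rw [hJz, hJtrue] at hJle
    have hsum2 : ∑ k ∈ Finset.range L, 2 * η ^ (L - k - 1) * normSq Q (w (t - L + k))
        = 2 * ∑ k ∈ Finset.range L, η ^ (L - k - 1) * normSq Q (w (t - L + k)) := by
      rw [Finset.mul_sum]
      exact Finset.sum_congr rfl fun k _ => by ring
    rw [hsum2] at hJle
    linarith [hJle, hA2, hQs]
  -- step 2: bound the estimation error by the deterministic quantity, via i-IOSS
  have hb : normSq P1 (x t - xhat t) ≤ lam21 * (η ^ L * A + QS + YS) := by
    by_cases hstep : M + delta Ks t < t
    · -- contraction case: split the window at the measurement time μ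
      obtain ⟨μ, c, hhor, hτ1, hτμ, hμt, hinner, houter⟩ :=
        step_struct d i0 Ks hKs M t hM1 hstep
      rw [← hLdef] at hinner
      set T1 := μ - (t - L) with hT1def
      set T2 := t - μ with hT2def
      have hT1T2 : T1 + T2 = L := by omega
      have hτT1 : t - L + T1 = μ := by omega
      -- inner i-IOSS application on [t-L, μ]
      have hin := hIOSS (fun k => x (t - L + k)) xb (fun k => u (t - L + k))
        (fun k => w (t - L + k)) (fun k => ω'' (t - L + k))
        (fun k => hwW _) (fun k => hω''W _) (fun k => hxdyn _) (fun k => rfl) T1 (i0 + c)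
      have hYin : (∑ j ∈ Finset.range T1, Set.indicator (sampleSet d (i0 + c))
          (fun j => η ^ (T1 - j - 1) * normSq R
            (hout (x (t - L + j)) (u (t - L + j)) (w (t - L + j))
              - hout (xb j) (u (t - L + j)) (ω'' (t - L + j)))) j) = 0 := by
        refine Finset.sum_eq_zero fun j hj => ?_
        exact Set.indicator_of_notMem (fun hmem => hinner j hmem (Finset.mem_range.1 hj)) _
      rw [hYin, add_zero, hτT1] at hin
      simp only [Nat.add_zero] at hin
      rw [hxb0, ← hAdef] at hin
      have hin' := hin
      -- outer i-IOSS application on [μ, t]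
      have hdyn2 : ∀ k, xb (T1 + (k + 1)) = f (xb (T1 + k)) (u (μ + k)) (ω'' (μ + k)) := by
        intro k
        have e : t - L + (T1 + k) = μ + k := by omega
        show rollout f u ω'' (t - L) (zstar t) (T1 + (k + 1)) = _
        rw [show T1 + (k + 1) = (T1 + k) + 1 from rfl, rollout_succ, e]
      have hout2 := hIOSS (fun k => x (μ + k)) (fun k => xb (T1 + k)) (fun k => u (μ + k))
        (fun k => w (μ + k)) (fun k => ω'' (μ + k))
        (fun k => hwW _) (fun k => hω''W _) (fun k => hxdyn _) hdyn2 T2 (i0 + c + 1)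
      rw [show μ + T2 = t by omega, hT1T2, hxbL] at hout2
      simp only [Nat.add_zero] at hout2
      -- put the two windows together
      set W1 : ℝ := ∑ j ∈ Finset.range T1, η ^ (T1 - j - 1)
          * normSq Q (w (t - L + j) - ω'' (t - L + j)) with hW1def
      set W2 : ℝ := ∑ j ∈ Finset.range T2, η ^ (T2 - j - 1)
          * normSq Q (w (μ + j) - ω'' (μ + j)) with hW2def
      set Y2 : ℝ := ∑ j ∈ Finset.range T2, Set.indicator (sampleSet d (i0 + c + 1))
          (fun j => η ^ (T2 - j - 1) * normSq R
            (hout (x (μ + j)) (u (μ + j)) (w (μ + j))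
              - hout (xb (T1 + j)) (u (μ + j)) (ω'' (μ + j)))) j with hY2def
      have hW2nn : 0 ≤ W2 := by
        refine Finset.sum_nonneg fun j _ =>
          mul_nonneg (pow_nonneg hη0 _) (normSq_nonneg hQ _)
      have hr : Finset.range L = Finset.range (T1 + T2) := by rw [hT1T2]
      have hQSsplit : lam21 * QS = lam21 * (η ^ T2 * W1) + lam21 * W2 := by
        have hQSeq : QS = η ^ T2 * W1 + W2 := by
          rw [hQSdef, hW1def, hW2def, hr, Finset.sum_range_add, Finset.mul_sum]
          congr 1
          · refine Finset.sum_congr rfl fun j hj => ?_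
            have hjT1 : j < T1 := Finset.mem_range.1 hj
            rw [← mul_assoc, ← pow_add,
              show T2 + (T1 - j - 1) = L - j - 1 by omega]
          · refine Finset.sum_congr rfl fun j hj => ?_
            rw [show t - L + (T1 + j) = μ + j by omega,
              show L - (T1 + j) - 1 = T2 - j - 1 by omega]
        rw [hQSeq]; ring
      have hY2le : Y2 ≤ YS := by
        have hYSsplit : YS = (∑ k ∈ Finset.range T1, Set.indicator Ks
            (fun _ => η ^ (L - k - 1) *
              normSq R (y (t - L + k) - hout (xb k) (u (t - L + k)) (ω'' (t - L + k))))
            (t - L + k))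
            + ∑ j ∈ Finset.range T2, Set.indicator Ks
            (fun _ => η ^ (L - (T1 + j) - 1) *
              normSq R (y (t - L + (T1 + j)) - hout (xb (T1 + j)) (u (t - L + (T1 + j)))
                (ω'' (t - L + (T1 + j))))) (t - L + (T1 + j)) := by
          rw [hYSdef, hr, Finset.sum_range_add]
        have hfirst : 0 ≤ ∑ k ∈ Finset.range T1, Set.indicator Ks
            (fun _ => η ^ (L - k - 1) *
              normSq R (y (t - L + k) - hout (xb k) (u (t - L + k)) (ω'' (t - L + k))))
            (t - L + k) := by
          refine Finset.sum_nonneg fun k _ => Set.indicator_nonneg (fun _ _ => ?_) _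
          exact mul_nonneg (pow_nonneg hη0 _) (normSq_nonneg hR _)
        have hsecond : Y2 ≤ ∑ j ∈ Finset.range T2, Set.indicator Ks
            (fun _ => η ^ (L - (T1 + j) - 1) *
              normSq R (y (t - L + (T1 + j)) - hout (xb (T1 + j)) (u (t - L + (T1 + j)))
                (ω'' (t - L + (T1 + j))))) (t - L + (T1 + j)) := by
          rw [hY2def]
          refine Finset.sum_le_sum fun j hj => ?_
          have h1 : t - L + (T1 + j) = μ + j := by omega
          have h2 : L - (T1 + j) - 1 = T2 - j - 1 := by omega
          rw [h1, h2]
          simp only [Set.indicator_apply]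
          split_ifs with hm1 hm2
          · exact le_of_eq (by rw [hy (μ + j)])
          · exact absurd (houter j hm1) hm2
          · exact mul_nonneg (pow_nonneg hη0 _) (normSq_nonneg hR _)
          · exact le_rfl
        rw [hYSsplit]
        linarith
      have hpow2 : η ^ T2 * η ^ T1 = η ^ L := by rw [← pow_add]; congr 1; omega
      have hgen1 : normSq P2 (x μ - xb T1) ≤ lam21 * normSq P1 (x μ - xb T1) := hgen _
      have hlam0 : (0:ℝ) ≤ lam21 := by linarith
      have i1 : normSq P2 (x μ - xb T1) ≤ lam21 * (η ^ T1 * A + W1) :=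
        le_trans hgen1 (mul_le_mul_of_nonneg_left hin' hlam0)
      have i3 : η ^ T2 * normSq P2 (x μ - xb T1) ≤ η ^ T2 * (lam21 * (η ^ T1 * A + W1)) :=
        mul_le_mul_of_nonneg_left i1 (pow_nonneg hη0 _)
      have e1 : η ^ T2 * (lam21 * (η ^ T1 * A + W1)) = lam21 * (η ^ L * A) + lam21 * (η ^ T2 * W1) := by
        rw [← hpow2]; ring
      have hW2' : W2 ≤ lam21 * W2 := le_mul_of_one_le_left hW2nn hlam1
      have hY2' : Y2 ≤ lam21 * YS := le_trans hY2le (le_mul_of_one_le_left hYSnn hlam1)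
      have hfinal : normSq P1 (x t - xhat t) ≤ η ^ T2 * normSq P2 (x μ - xb T1) + W2 + Y2 :=
        hout2
      calc normSq P1 (x t - xhat t) ≤ η ^ T2 * normSq P2 (x μ - xb T1) + W2 + Y2 := hfinal
        _ ≤ lam21 * (η ^ L * A) + lam21 * (η ^ T2 * W1) + W2 + Y2 := by
            rw [← e1]; linarith
        _ ≤ lam21 * (η ^ L * A) + lam21 * QS + lam21 * YS := by
            rw [hQSsplit]; linarith
        _ = lam21 * (η ^ L * A + QS + YS) := by ring
    · -- "short horizon" case: the window starts at time 0 and K_{i0} = Ks applies directly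
      have hLt : L = t := by rw [hLdef]; unfold horizon; omega
      have hios := hIOSS (fun k => x (t - L + k)) xb (fun k => u (t - L + k))
        (fun k => w (t - L + k)) (fun k => ω'' (t - L + k))
        (fun k => hwW _) (fun k => hω''W _) (fun k => hxdyn _) (fun k => rfl) L i0
      rw [show t - L + L = t from by omega, hxbL] at hios
      have hY0 : (∑ j ∈ Finset.range L, Set.indicator (sampleSet d i0)
          (fun j => η ^ (L - j - 1) * normSq R
            (hout (x (t - L + j)) (u (t - L + j)) (w (t - L + j))
              - hout (xb j) (u (t - L + j)) (ω'' (t - L + j)))) j) ≤ YS := by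
        rw [hYSdef]
        refine Finset.sum_le_sum fun j hj => ?_
        have hjL : j < L := Finset.mem_range.1 hj
        have hjj : t - L + j = j := by omega
        simp only [Set.indicator_apply]
        split_ifs with hm1 hm2
        · exact le_of_eq (by rw [hy (t - L + j)])
        · exfalso
          apply hm2
          rw [hKs, hjj]
          exact hm1
        · exact mul_nonneg (pow_nonneg hη0 _) (normSq_nonneg hR _)
        · exact le_rfl
      simp only [Nat.add_zero] at hios
      rw [hxb0, ← hAdef] at hios
      have htot : normSq P1 (x t - xhat t) ≤ η ^ L * A + QS + YS := by
        rw [hQSdef]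
        linarith [hios, hY0]
      calc normSq P1 (x t - xhat t) ≤ η ^ L * A + QS + YS := htot
        _ ≤ lam21 * (η ^ L * A + QS + YS) := by
            refine le_mul_of_one_le_left ?_ hlam1
            have := mul_nonneg hηL hAnn
            linarith
  -- put the two steps together
  calc normSq P1 (x t - xhat t) ≤ lam21 * (η ^ L * A + QS + YS) := hb
    _ ≤ lam21 * (4 * (η ^ L * normSq P2 (x (t - L) - xhat (t - L))
          + ∑ k ∈ Finset.range L, η ^ (L - k - 1) * normSq Q (w (t - L + k)))) := by
        refine mul_le_mul_of_nonneg_left hEb (by linarith)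
    _ = _ := by ring

lemma sqrt_term (C ρw E : ℝ) (hC : 0 ≤ C) (hρ : 0 ≤ ρw) (hE : 0 ≤ E) (e : ℕ) :
    Real.sqrt (4 * C * ρw ^ e * E)
      = 2 * Real.sqrt C * Real.sqrt ρw ^ e * Real.sqrt E := by
  have h4 : Real.sqrt 4 = 2 := by
    rw [show (4:ℝ) = 2 ^ 2 by norm_num, Real.sqrt_sq (by norm_num : (0:ℝ) ≤ 2)]
  rw [Real.sqrt_mul (by positivity) E, Real.sqrt_mul (by positivity) (ρw ^ e),
    Real.sqrt_mul (by norm_num : (0:ℝ) ≤ 4) C, sqrt_pow_eq ρw hρ, h4]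

end AuxSpectral

set_option maxHeartbeats 1600000 in
/-- Theorem on RGES of sample-based MHE. Under sample-based exponential
i-IOSS with respect to the sampling collection generated by `d`, measurement times
`Ks ∈ K`, a feasible true trajectory, and a horizon `M ≥ d_max` with
`ρ^M := 4 λ_max(P2,P1)² η^M < 1`, the MHE estimation error `ê_t = x_t − x̂_t` satisfies the
robust global exponential stability bound. -/
theorem sampleBased_MHE_is_RGES
    {n m q p : ℕ}
    (f : (Fin n → ℝ) → (Fin m → ℝ) → (Fin q → ℝ) → (Fin n → ℝ))
    (hout : (Fin n → ℝ) → (Fin m → ℝ) → (Fin q → ℝ) → (Fin p → ℝ))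
    (X : Set (Fin n → ℝ)) (W : Set (Fin q → ℝ)) (Y : Set (Fin p → ℝ))
    -- sampling collection generated by a bounded sequence
    (d : ℕ → ℕ) (dmax : ℕ) (hd : ∀ i, d i ≤ dmax)
    -- i-IOSS parameters
    (P1 P2 : Matrix (Fin n) (Fin n) ℝ) (Q : Matrix (Fin q) (Fin q) ℝ)
    (R : Matrix (Fin p) (Fin p) ℝ) (η : ℝ)
    (hP1 : P1.PosDef) (hP2 : P2.PosDef) (hQ : Q.PosSemidef) (hR : R.PosSemidef)
    (hη0 : 0 ≤ η) (hη1 : η < 1)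
    -- sample-based exponential i-IOSS with respect to every K_i
    (hIOSS : ∀ (xa xb : ℕ → Fin n → ℝ) (ua : ℕ → Fin m → ℝ) (wa wb : ℕ → Fin q → ℝ),
      (∀ t, wa t ∈ W) → (∀ t, wb t ∈ W) →
      (∀ t, xa (t + 1) = f (xa t) (ua t) (wa t)) →
      (∀ t, xb (t + 1) = f (xb t) (ua t) (wb t)) →
      ∀ t i : ℕ,
        normSq P1 (xa t - xb t) ≤
          η ^ t * normSq P2 (xa 0 - xb 0)
          + ∑ j ∈ Finset.range t, η ^ (t - j - 1) * normSq Q (wa j - wb j)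
          + ∑ j ∈ Finset.range t, Set.indicator (sampleSet d i)
              (fun j => η ^ (t - j - 1) *
                normSq R (hout (xa j) (ua j) (wa j) - hout (xb j) (ua j) (wb j))) j)
    -- the measurement times form an element K_s ∈ K
    (Ks : Set ℕ) (i0 : ℕ) (hKs : Ks = sampleSet d i0)
    -- the true trajectory satisfies the constraints
    (u : ℕ → Fin m → ℝ) (w : ℕ → Fin q → ℝ) (x : ℕ → Fin n → ℝ) (y : ℕ → Fin p → ℝ)
    (hxdyn : ∀ t, x (t + 1) = f (x t) (u t) (w t))
    (hy : ∀ t, y t = hout (x t) (u t) (w t))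
    (hxX : ∀ t, x t ∈ X) (hwW : ∀ t, w t ∈ W) (hyY : ∀ t, y t ∈ Y)
    -- horizon choice
    (M : ℕ) (hM : dmax ≤ M)
    -- eigenvalue constants: λ_max(P2,P1), λ_max(P2), λ_max(Q), λ_min(P1)
    (lam21 lamP2max lamQmax lamP1min : ℝ)
    (hlam21 : IsGreatest {l : ℝ | (P2 - l • P1).det = 0} lam21)
    (hlamP2max : IsGreatest {l : ℝ | (P2 - l • (1 : Matrix (Fin n) (Fin n) ℝ)).det = 0} lamP2max)
    (hlamQmax : IsGreatest {l : ℝ | (Q - l • (1 : Matrix (Fin q) (Fin q) ℝ)).det = 0} lamQmax)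
    (hlamP1min : IsLeast {l : ℝ | (P1 - l • (1 : Matrix (Fin n) (Fin n) ℝ)).det = 0} lamP1min)
    -- contraction condition defining ρ ∈ [0,1): ρ^M = 4 λ_max(P2,P1)² η^M < 1
    (hsmall : 4 * lam21 ^ 2 * η ^ M < 1)
    (ρ : ℝ) (hρ0 : 0 ≤ ρ) (hρ1 : ρ < 1) (hρM : ρ ^ M = 4 * lam21 ^ 2 * η ^ M)
    -- the estimates are generated by the sample-based MHE scheme
    (zstar : ℕ → Fin n → ℝ) (ωstar : ℕ → ℕ → Fin q → ℝ) (xhat : ℕ → Fin n → ℝ)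
    (hfeas : ∀ t, Feasible f hout X W Y u t (horizon Ks M t) (zstar t) (ωstar t))
    (hopt : ∀ t (z' : Fin n → ℝ) (ω' : ℕ → Fin q → ℝ),
      Feasible f hout X W Y u t (horizon Ks M t) z' ω' →
      mheCost f hout P2 Q R η Ks u y (xhat (t - horizon Ks M t)) t (horizon Ks M t)
          (zstar t) (ωstar t)
        ≤ mheCost f hout P2 Q R η Ks u y (xhat (t - horizon Ks M t)) t (horizon Ks M t) z' ω')
    (hxhat : ∀ t, xhat t = rollout f u (ωstar t) (t - horizon Ks M t) (zstar t) (horizon Ks M t)) :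
    -- RGES bound on the estimation error ê_t = x_t − x̂_t
    ∀ t, euclNorm (x t - xhat t) ≤
      2 * Real.sqrt (lam21 * lamP2max / lamP1min) * Real.sqrt ρ ^ t * euclNorm (x 0 - xhat 0)
      + ∑ j ∈ Finset.range t,
          2 * Real.sqrt (lam21 * lamQmax / lamP1min) * Real.sqrt ρ ^ (t - j - 1) * euclNorm (w j) := by
  -- First, derive the basic constants.
  have hM1 : 1 ≤ M := by
    rcases Nat.eq_zero_or_pos M with hM0 | h
    · exfalso
      rw [hM0] at hρM hsmall
      simp only [pow_zero] at hρM hsmall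
      linarith
    · exact h
  -- `P1 ≤ P2` as quadratic forms (from i-IOSS at time 0)
  have hP12 : ∀ v : Fin n → ℝ, normSq P1 v ≤ normSq P2 v := by
    intro v
    have h := hIOSS (fun k => rollout f u w 0 v k) (fun k => rollout f u w 0 0 k)
      (fun k => u (0 + k)) (fun k => w (0 + k)) (fun k => w (0 + k))
      (fun k => hwW _) (fun k => hwW _) (fun k => rfl) (fun k => rfl) 0 0
    simpa [show rollout f u w 0 v 0 = v from rfl,
      show rollout f u w 0 (0 : Fin n → ℝ) 0 = 0 from rfl] using h
  -- `lam21 ≥ 1`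
  have hP1pos : ∀ v : Fin n → ℝ, v ≠ 0 → 0 < normSq P1 v := by
    intro v hv
    have := hP1.dotProduct_mulVec_pos hv
    simpa [normSq] using this
  have hlam1 : 1 ≤ lam21 := by
    obtain ⟨v, hv, hveq⟩ := genEig_pair hlam21.1
    have h1 := hP12 v
    have h2 := hP1pos v hv
    nlinarith
  have hlam0 : (0:ℝ) ≤ lam21 := by linarith
  have hgen : ∀ v : Fin n → ℝ, normSq P2 v ≤ lam21 * normSq P1 v :=
    normSq_le_genEig hP1 hP2.1 hlam21
  -- euclidean-norm comparison constants
  have hsumsq_pos : ∀ {k : ℕ} (v : Fin k → ℝ), v ≠ 0 → 0 < ∑ i, v i ^ 2 := by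
    intro k v hv
    obtain ⟨i, hi⟩ := Function.ne_iff.1 hv
    refine Finset.sum_pos' (fun i _ => sq_nonneg _) ⟨i, Finset.mem_univ i, ?_⟩
    have h1 := sq_nonneg (v i)
    have h2 : v i ^ 2 ≠ 0 := pow_ne_zero 2 hi
    exact lt_of_le_of_ne h1 (Ne.symm h2)
  have hone : ∀ {k : ℕ} (v : Fin k → ℝ),
      normSq (1 : Matrix (Fin k) (Fin k) ℝ) v = ∑ i, v i ^ 2 := by
    intro k v
    rw [normSq, Matrix.one_mulVec, dotProduct_self_eq_sum_sq]
  have hP1min_pos : 0 < lamP1min := by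
    obtain ⟨v, hv, hveq⟩ := genEig_pair hlamP1min.1
    rw [hone v] at hveq
    have h2 := hP1pos v hv
    have h3 := hsumsq_pos v hv
    nlinarith
  have hP2max_nn : 0 ≤ lamP2max := by
    obtain ⟨v, hv, hveq⟩ := genEig_pair hlamP2max.1
    rw [hone v] at hveq
    have h2 := normSq_nonneg hP2.posSemidef v
    have h3 := hsumsq_pos v hv
    nlinarith
  have hQmax_nn : 0 ≤ lamQmax := by
    obtain ⟨v, hv, hveq⟩ := genEig_pair hlamQmax.1
    rw [hone v] at hveq
    have h2 := normSq_nonneg hQ v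
    have h3 := hsumsq_pos v hv
    nlinarith
  have hP2max := fun v => normSq_le_lamMax hP2.1 hlamP2max v
  have hQmax := fun v => normSq_le_lamMax hQ.1 hlamQmax v
  have hP1min := fun v => normSq_ge_lamMin hP1.1 hlamP1min v
  -- `η ≤ ρ`
  have hηρ : η ≤ ρ := by
    by_contra hcon
    push_neg at hcon
    have h1 : ρ ^ M < η ^ M := by
      refine pow_lt_pow_left₀ hcon hρ0 (by omega)
    have hlamsq : 1 ≤ lam21 ^ 2 := by nlinarith
    have h2 : η ^ M ≤ 4 * lam21 ^ 2 * η ^ M := by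
      nlinarith [pow_nonneg hη0 M]
    rw [hρM] at h1
    linarith
  -- contraction estimate for horizons of length at least `M`
  have hcontr : ∀ Lh, M ≤ Lh → 4 * lam21 ^ 2 * η ^ Lh ≤ ρ ^ Lh := by
    intro Lh h
    have e1 : η ^ Lh = η ^ M * η ^ (Lh - M) := by rw [← pow_add]; congr 1; omega
    have e2 : ρ ^ Lh = ρ ^ M * ρ ^ (Lh - M) := by rw [← pow_add]; congr 1; omega
    have h3 : η ^ (Lh - M) ≤ ρ ^ (Lh - M) := pow_le_pow_left₀ hη0 hηρ _
    calc 4 * lam21 ^ 2 * η ^ Lh = (4 * lam21 ^ 2 * η ^ M) * η ^ (Lh - M) := by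
          rw [e1]; ring
      _ = ρ ^ M * η ^ (Lh - M) := by rw [← hρM]
      _ ≤ ρ ^ M * ρ ^ (Lh - M) := mul_le_mul_of_nonneg_left h3 (pow_nonneg hρ0 M)
      _ = ρ ^ Lh := e2.symm
  -- the key per-window estimate
  have hkey := key_bound f hout X W Y d P1 P2 Q R η hP1 hP2 hQ hR hη0 hIOSS Ks i0 hKs
    u w x y hxdyn hy hxX hwW hyY M hM1 lam21 hlam1 hgen zstar ωstar xhat hfeas hopt hxhat
  -- the strong-induction bound in squared weighted norms
  have main : ∀ t, normSq P1 (x t - xhat t)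
      ≤ 4 * lam21 * ρ ^ t * normSq P2 (x 0 - xhat 0)
        + ∑ j ∈ Finset.range t,
            4 * lam21 * lamQmax * ρ ^ (t - j - 1) * (∑ i, (w j) i ^ 2) := by
    intro t
    induction t using Nat.strong_induction_on with
    | _ t ih =>
    have hk := hkey t
    set L := horizon Ks M t with hLdef
    have hLle : L ≤ t := min_le_left _ _
    have hP0nn : 0 ≤ normSq P2 (x 0 - xhat 0) := normSq_nonneg hP2.posSemidef _
    by_cases hstep : M + delta Ks t < t
    · -- contraction case
      have hLM : M ≤ L := by rw [hLdef]; unfold horizon; omega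
      have hτlt : t - L < t := by omega
      have ihτ := ih (t - L) hτlt
      have hbτnn : 0 ≤ normSq P1 (x (t - L) - xhat (t - L)) :=
        normSq_nonneg hP1.posSemidef _
      -- prior term chain
      have hp1 : 4 * lam21 * η ^ L * normSq P2 (x (t - L) - xhat (t - L))
          ≤ ρ ^ L * normSq P1 (x (t - L) - xhat (t - L)) := by
        have h1 : normSq P2 (x (t - L) - xhat (t - L))
            ≤ lam21 * normSq P1 (x (t - L) - xhat (t - L)) := hgen _
        have h2 : (0:ℝ) ≤ 4 * lam21 * η ^ L := by positivity
        have h3 := hcontr L hLM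
        nlinarith [pow_nonneg hη0 L]
      have hp2 : ρ ^ L * normSq P1 (x (t - L) - xhat (t - L))
          ≤ ρ ^ L * (4 * lam21 * ρ ^ (t - L) * normSq P2 (x 0 - xhat 0)
            + ∑ j ∈ Finset.range (t - L),
                4 * lam21 * lamQmax * ρ ^ (t - L - j - 1) * (∑ i, (w j) i ^ 2)) :=
        mul_le_mul_of_nonneg_left ihτ (pow_nonneg hρ0 L)
      have hp3 : ρ ^ L * (4 * lam21 * ρ ^ (t - L) * normSq P2 (x 0 - xhat 0)
            + ∑ j ∈ Finset.range (t - L),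
                4 * lam21 * lamQmax * ρ ^ (t - L - j - 1) * (∑ i, (w j) i ^ 2))
          = 4 * lam21 * ρ ^ t * normSq P2 (x 0 - xhat 0)
            + ∑ j ∈ Finset.range (t - L),
                4 * lam21 * lamQmax * ρ ^ (t - j - 1) * (∑ i, (w j) i ^ 2) := by
        rw [mul_add, Finset.mul_sum]
        congr 1
        · have : ρ ^ L * ρ ^ (t - L) = ρ ^ t := by rw [← pow_add]; congr 1; omega
          calc ρ ^ L * (4 * lam21 * ρ ^ (t - L) * normSq P2 (x 0 - xhat 0))
              = 4 * lam21 * (ρ ^ L * ρ ^ (t - L)) * normSq P2 (x 0 - xhat 0) := by ring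
            _ = _ := by rw [this]
        · refine Finset.sum_congr rfl fun j hj => ?_
          have hjτ : j < t - L := Finset.mem_range.1 hj
          have : ρ ^ L * ρ ^ (t - L - j - 1) = ρ ^ (t - j - 1) := by
            rw [← pow_add]; congr 1; omega
          calc ρ ^ L * (4 * lam21 * lamQmax * ρ ^ (t - L - j - 1) * (∑ i, (w j) i ^ 2))
              = 4 * lam21 * lamQmax * (ρ ^ L * ρ ^ (t - L - j - 1)) * (∑ i, (w j) i ^ 2) := by
                ring
            _ = _ := by rw [this]
      -- window disturbance terms
      have hq1 : 4 * lam21 * (∑ k ∈ Finset.range L,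
            η ^ (L - k - 1) * normSq Q (w (t - L + k)))
          ≤ ∑ k ∈ Finset.range L,
              4 * lam21 * lamQmax * ρ ^ (t - (t - L + k) - 1) * (∑ i, (w (t - L + k)) i ^ 2) := by
        rw [Finset.mul_sum]
        refine Finset.sum_le_sum fun k hk' => ?_
        have he : t - (t - L + k) - 1 = L - k - 1 := by omega
        rw [he]
        have e1 : η ^ (L - k - 1) * normSq Q (w (t - L + k))
            ≤ ρ ^ (L - k - 1) * (lamQmax * (∑ i, (w (t - L + k)) i ^ 2)) :=
          mul_le_mul (pow_le_pow_left₀ hη0 hηρ _) (hQmax (w (t - L + k)))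
            (normSq_nonneg hQ _) (pow_nonneg hρ0 _)
        calc 4 * lam21 * (η ^ (L - k - 1) * normSq Q (w (t - L + k)))
            ≤ 4 * lam21 * (ρ ^ (L - k - 1) * (lamQmax * (∑ i, (w (t - L + k)) i ^ 2))) :=
              mul_le_mul_of_nonneg_left e1 (by positivity)
          _ = 4 * lam21 * lamQmax * ρ ^ (L - k - 1) * (∑ i, (w (t - L + k)) i ^ 2) := by ring
      -- the target sum splits over the two windows
      have hrt : Finset.range t = Finset.range ((t - L) + L) := by congr 1; omega
      have hsplit : ∑ j ∈ Finset.range t,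
            4 * lam21 * lamQmax * ρ ^ (t - j - 1) * (∑ i, (w j) i ^ 2)
          = (∑ j ∈ Finset.range (t - L),
              4 * lam21 * lamQmax * ρ ^ (t - j - 1) * (∑ i, (w j) i ^ 2))
            + ∑ k ∈ Finset.range L,
                4 * lam21 * lamQmax * ρ ^ (t - (t - L + k) - 1) * (∑ i, (w (t - L + k)) i ^ 2) := by
        rw [hrt, Finset.sum_range_add]
      rw [hsplit]
      have hk' : normSq P1 (x t - xhat t)
          ≤ 4 * lam21 * η ^ L * normSq P2 (x (t - L) - xhat (t - L))
            + 4 * lam21 * (∑ k ∈ Finset.range L,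
                η ^ (L - k - 1) * normSq Q (w (t - L + k))) := by
        calc normSq P1 (x t - xhat t) ≤ _ := hk
          _ = _ := by ring
      linarith
    · -- within the first window
      have hLt : L = t := by rw [hLdef]; unfold horizon; omega
      rw [hLt] at hk
      simp only [Nat.sub_self, Nat.zero_add] at hk
      have hk' : normSq P1 (x t - xhat t)
          ≤ 4 * lam21 * η ^ t * normSq P2 (x 0 - xhat 0)
            + 4 * lam21 * (∑ k ∈ Finset.range t, η ^ (t - k - 1) * normSq Q (w k)) := by
        calc normSq P1 (x t - xhat t) ≤ _ := hk
          _ = _ := by ring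
      have hp : 4 * lam21 * η ^ t * normSq P2 (x 0 - xhat 0)
          ≤ 4 * lam21 * ρ ^ t * normSq P2 (x 0 - xhat 0) :=
        mul_le_mul_of_nonneg_right
          (mul_le_mul_of_nonneg_left (pow_le_pow_left₀ hη0 hηρ t)
            (by positivity : (0:ℝ) ≤ 4 * lam21)) hP0nn
      have hq : 4 * lam21 * (∑ k ∈ Finset.range t, η ^ (t - k - 1) * normSq Q (w k))
          ≤ ∑ j ∈ Finset.range t,
              4 * lam21 * lamQmax * ρ ^ (t - j - 1) * (∑ i, (w j) i ^ 2) := by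
        rw [Finset.mul_sum]
        refine Finset.sum_le_sum fun k hk' => ?_
        have e1 : η ^ (t - k - 1) * normSq Q (w k)
            ≤ ρ ^ (t - k - 1) * (lamQmax * (∑ i, (w k) i ^ 2)) :=
          mul_le_mul (pow_le_pow_left₀ hη0 hηρ _) (hQmax (w k))
            (normSq_nonneg hQ _) (pow_nonneg hρ0 _)
        calc 4 * lam21 * (η ^ (t - k - 1) * normSq Q (w k))
            ≤ 4 * lam21 * (ρ ^ (t - k - 1) * (lamQmax * (∑ i, (w k) i ^ 2))) :=
              mul_le_mul_of_nonneg_left e1 (by positivity)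
          _ = 4 * lam21 * lamQmax * ρ ^ (t - k - 1) * (∑ i, (w k) i ^ 2) := by ring
      linarith
  -- conversion to Euclidean norms
  intro t
  have hmt := main t
  have hEt := hP1min (x t - xhat t)
  have hE0 : 4 * lam21 * ρ ^ t * normSq P2 (x 0 - xhat 0)
      ≤ 4 * lam21 * ρ ^ t * (lamP2max * ∑ i, (x 0 - xhat 0) i ^ 2) :=
    mul_le_mul_of_nonneg_left (hP2max _) (by positivity)
  obtain ⟨E0, hE0def⟩ : ∃ E : ℝ, E = ∑ i, (x 0 - xhat 0) i ^ 2 := ⟨_, rfl⟩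
  have hE0nn : 0 ≤ E0 := by
    rw [hE0def]; exact Finset.sum_nonneg fun i _ => sq_nonneg _
  obtain ⟨C1, hC1def⟩ : ∃ C : ℝ, C = lam21 * lamP2max / lamP1min := ⟨_, rfl⟩
  obtain ⟨C2, hC2def⟩ : ∃ C : ℝ, C = lam21 * lamQmax / lamP1min := ⟨_, rfl⟩
  have hC1nn : 0 ≤ C1 := by rw [hC1def]; positivity
  have hC2nn : 0 ≤ C2 := by rw [hC2def]; positivity
  obtain ⟨Dt, hDtdef⟩ : ∃ D : ℝ, D = 4 * C1 * ρ ^ t * E0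
      + ∑ j ∈ Finset.range t, 4 * C2 * ρ ^ (t - j - 1) * (∑ i, (w j) i ^ 2) := ⟨_, rfl⟩
  have hne : lamP1min ≠ 0 := ne_of_gt hP1min_pos
  have hsq : ∑ i, (x t - xhat t) i ^ 2 ≤ Dt := by
    have halg1 : ∀ r e : ℝ, lamP1min * (4 * C1 * r * e) = 4 * lam21 * r * (lamP2max * e) := by
      intro r e
      rw [hC1def]
      calc lamP1min * (4 * (lam21 * lamP2max / lamP1min) * r * e)
          = (lamP1min / lamP1min) * (4 * lam21 * r * (lamP2max * e)) := by ring
        _ = 4 * lam21 * r * (lamP2max * e) := by rw [div_self hne, one_mul]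
    have halg2 : ∀ r e : ℝ, lamP1min * (4 * C2 * r * e) = 4 * lam21 * lamQmax * r * e := by
      intro r e
      rw [hC2def]
      calc lamP1min * (4 * (lam21 * lamQmax / lamP1min) * r * e)
          = (lamP1min / lamP1min) * (4 * lam21 * lamQmax * r * e) := by ring
        _ = 4 * lam21 * lamQmax * r * e := by rw [div_self hne, one_mul]
    have hP1minDt : lamP1min * Dt = 4 * lam21 * ρ ^ t * (lamP2max * E0)
        + ∑ j ∈ Finset.range t,
            4 * lam21 * lamQmax * ρ ^ (t - j - 1) * (∑ i, (w j) i ^ 2) := by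
      rw [hDtdef, mul_add, Finset.mul_sum]
      congr 1
      · exact halg1 _ _
      · exact Finset.sum_congr rfl fun j hj => halg2 _ _
    have hE0' : 4 * lam21 * ρ ^ t * normSq P2 (x 0 - xhat 0)
        ≤ 4 * lam21 * ρ ^ t * (lamP2max * E0) := by
      rw [hE0def]
      exact hE0
    have h1 : lamP1min * (∑ i, (x t - xhat t) i ^ 2) ≤ lamP1min * Dt := by
      rw [hP1minDt]
      linarith
    exact le_of_mul_le_mul_left h1 hP1min_pos
  have hterm1 : Real.sqrt (4 * C1 * ρ ^ t * E0)
      = 2 * Real.sqrt C1 * Real.sqrt ρ ^ t * euclNorm (x 0 - xhat 0) := by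
    rw [sqrt_term C1 ρ E0 hC1nn hρ0 hE0nn t, hE0def]
    rfl
  rw [← hC1def, ← hC2def]
  calc euclNorm (x t - xhat t) = Real.sqrt (∑ i, (x t - xhat t) i ^ 2) := rfl
    _ ≤ Real.sqrt Dt := Real.sqrt_le_sqrt hsq
    _ ≤ Real.sqrt (4 * C1 * ρ ^ t * E0)
        + Real.sqrt (∑ j ∈ Finset.range t,
            4 * C2 * ρ ^ (t - j - 1) * (∑ i, (w j) i ^ 2)) := by
        rw [hDtdef]
        refine sqrt_add_le _ _ (by positivity) ?_
        exact Finset.sum_nonneg fun j _ => by positivity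
    _ ≤ Real.sqrt (4 * C1 * ρ ^ t * E0)
        + ∑ j ∈ Finset.range t,
            Real.sqrt (4 * C2 * ρ ^ (t - j - 1) * (∑ i, (w j) i ^ 2)) := by
        have := sqrt_sum_le (s := Finset.range t)
          (fun j => 4 * C2 * ρ ^ (t - j - 1) * (∑ i, (w j) i ^ 2))
          (fun j _ => by positivity)
        linarith
    _ = 2 * Real.sqrt C1 * Real.sqrt ρ ^ t * euclNorm (x 0 - xhat 0)
        + ∑ j ∈ Finset.range t,
            2 * Real.sqrt C2 * Real.sqrt ρ ^ (t - j - 1) * euclNorm (w j) := by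
        rw [hterm1]
        congr 1
        refine Finset.sum_congr rfl fun j hj => ?_
        exact sqrt_term C2 ρ _ hC2nn hρ0
          (Finset.sum_nonneg fun i _ => sq_nonneg _) _
end
end

section
/- Consider the linear system x_{t+1} = A x_t + B u_t + w_t, y_t = C x_t + D u_t with A ∈ ℝ^{n×n}, C ∈ ℝ^{p×n}, and a sampling collection K generated by a bounded sequence D. If there exists a finite T ∈ ℕ such that for every t > T the sample-based observability matrix formed with the time indices in the set K_1 ∩ [t−T−1, t−1] (i.e., the matrix obtained by stacking the block rows C A^{s} for s ∈ K_1 ∩ [t−T−1, t−1] in increasing order of s) has full column rank n, then the system is sample-based exponentially i-IOSS with respect to K. -/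
open scoped Classical

noncomputable section

/-- The linear system `x_{t+1} = A x_t + B u_t + w_t`, `y_t = C x_t + D u_t` is sample-based
exponentially i-IOSS with respect to the sampling collection `K = {K_i}` generated by `d`. -/
def sampleBasedExpIIOSS {n m p : ℕ} (A : Matrix (Fin n) (Fin n) ℝ) (B : Matrix (Fin n) (Fin m) ℝ)
    (C : Matrix (Fin p) (Fin n) ℝ) (D : Matrix (Fin p) (Fin m) ℝ) (d : ℕ → ℕ) : Prop :=
  ∃ (P1 P2 Q : Matrix (Fin n) (Fin n) ℝ) (R : Matrix (Fin p) (Fin p) ℝ) (η : ℝ),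
    P1.PosDef ∧ P2.PosDef ∧ Q.PosSemidef ∧ R.PosSemidef ∧ 0 ≤ η ∧ η < 1 ∧
    ∀ (x xt : ℕ → Fin n → ℝ) (u : ℕ → Fin m → ℝ) (w wt : ℕ → Fin n → ℝ),
      (∀ t, x (t + 1) = A.mulVec (x t) + B.mulVec (u t) + w t) →
      (∀ t, xt (t + 1) = A.mulVec (xt t) + B.mulVec (u t) + wt t) →
      ∀ t i : ℕ,
        normSq P1 (x t - xt t) ≤
          η ^ t * normSq P2 (x 0 - xt 0)
          + ∑ j ∈ Finset.range t, η ^ (t - j - 1) * normSq Q (w j - wt j)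
          + ∑ j ∈ Finset.range t, Set.indicator (sampleSet d i)
              (fun j => η ^ (t - j - 1) * normSq R
                ((C.mulVec (x j) + D.mulVec (u j)) - (C.mulVec (xt j) + D.mulVec (u j)))) j

/-! ### Auxiliary material for the proof -/

namespace SampleIIOSSAux

open Finset Matrix

/-- sum of squares of a finitely-indexed real vector -/
def sqv {ι : Type*} [Fintype ι] (v : ι → ℝ) : ℝ := ∑ i, v i ^ 2

lemma sqv_nonneg {ι : Type*} [Fintype ι] (v : ι → ℝ) : 0 ≤ sqv v :=
  Finset.sum_nonneg fun _ _ => _root_.sq_nonneg _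

/-- squared Frobenius norm of a matrix -/
def frob {a b : Type*} [Fintype a] [Fintype b] (M : Matrix a b ℝ) : ℝ := ∑ i, ∑ j, M i j ^ 2

lemma frob_nonneg {a b : Type*} [Fintype a] [Fintype b] (M : Matrix a b ℝ) : 0 ≤ frob M :=
  Finset.sum_nonneg fun _ _ => Finset.sum_nonneg fun _ _ => _root_.sq_nonneg _

lemma sqv_mulVec_le {a b : Type*} [Fintype a] [Fintype b] (M : Matrix a b ℝ) (u : b → ℝ) :
    sqv (M.mulVec u) ≤ frob M * sqv u := by
  unfold sqv frob
  rw [Finset.sum_mul]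
  refine Finset.sum_le_sum fun i _ => ?_
  calc (M.mulVec u i) ^ 2 = (∑ j, M i j * u j) ^ 2 := by rfl
    _ ≤ (∑ j, M i j ^ 2) * ∑ j, u j ^ 2 := Finset.sum_mul_sq_le_sq_mul_sq _ _ _

lemma sqv_finsum_le {ι κ : Type*} [Fintype κ] (s : Finset ι) (g : ι → κ → ℝ) :
    sqv (∑ l ∈ s, g l) ≤ s.card * ∑ l ∈ s, sqv (g l) := by
  unfold sqv
  calc ∑ i, (∑ l ∈ s, g l) i ^ 2 ≤ ∑ i, (s.card : ℝ) * ∑ l ∈ s, g l i ^ 2 := by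
        refine Finset.sum_le_sum fun i _ => ?_
        have := _root_.sq_sum_le_card_mul_sum_sq (s := s) (f := fun l => g l i)
        simpa [Finset.sum_apply] using this
    _ = s.card * ∑ l ∈ s, ∑ i, g l i ^ 2 := by
        rw [← Finset.mul_sum, Finset.sum_comm]

lemma sqv_add_le {ι : Type*} [Fintype ι] (x y : ι → ℝ) : sqv (x + y) ≤ 2 * sqv x + 2 * sqv y := by
  unfold sqv
  rw [Finset.mul_sum, Finset.mul_sum, ← Finset.sum_add_distrib]
  refine Finset.sum_le_sum fun i _ => ?_
  simp only [Pi.add_apply]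
  nlinarith [_root_.sq_nonneg (x i - y i)]

lemma sqv_sub_le {ι : Type*} [Fintype ι] (x y : ι → ℝ) : sqv (x - y) ≤ 2 * sqv x + 2 * sqv y := by
  have := sqv_add_le x (-y)
  have h2 : sqv (-y) = sqv y := by unfold sqv; simp
  rw [h2] at this
  simpa [sub_eq_add_neg] using this

/-- An injective linear map between finite-dimensional coordinate spaces admits a
reverse quantitative bound on sums of squares. -/
lemma exists_bound {n : ℕ} {ι : Type*} [Fintype ι] (f : (Fin n → ℝ) →ₗ[ℝ] (ι → ℝ))
    (hf : Function.Injective f) :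
    ∃ c : ℝ, 0 < c ∧ ∀ u : Fin n → ℝ, ∑ i, u i ^ 2 ≤ c * ∑ r, f u r ^ 2 := by
  classical
  let E := EuclideanSpace ℝ (Fin n)
  let F := EuclideanSpace ℝ ι
  let f' : E →ₗ[ℝ] F :=
    ((WithLp.linearEquiv 2 ℝ (ι → ℝ)).symm.toLinearMap.comp f).comp
      (WithLp.linearEquiv 2 ℝ (Fin n → ℝ)).toLinearMap
  have hf' : Function.Injective f' := by
    intro a b hab
    apply (WithLp.linearEquiv 2 ℝ (Fin n → ℝ)).injective
    apply hf
    have := congrArg (WithLp.linearEquiv 2 ℝ (ι → ℝ)) hab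
    simp [f'] at this
    exact this
  let e : E ≃ₗ[ℝ] LinearMap.range f' := LinearEquiv.ofInjective f' hf'
  let g : (LinearMap.range f' : Submodule ℝ F) →ₗ[ℝ] E := e.symm.toLinearMap
  let G := LinearMap.toContinuousLinearMap g
  refine ⟨(‖G‖ + 1) ^ 2, by positivity, fun u => ?_⟩
  set U : E := (WithLp.linearEquiv 2 ℝ (Fin n → ℝ)).symm u with hU
  have hnorm : ‖U‖ ≤ (‖G‖ + 1) * ‖f' U‖ := by
    have h1 : U = g (e U) := by simp [g, e]
    have h2 : ‖g (e U)‖ ≤ ‖G‖ * ‖e U‖ := G.le_opNorm (e U)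
    have h3 : ‖(e U : F)‖ = ‖f' U‖ := by
      congr 1
    have h4 : ‖e U‖ = ‖f' U‖ := h3
    calc ‖U‖ = ‖g (e U)‖ := by rw [← h1]
      _ ≤ ‖G‖ * ‖e U‖ := h2
      _ = ‖G‖ * ‖f' U‖ := by rw [h4]
      _ ≤ (‖G‖ + 1) * ‖f' U‖ := by nlinarith [norm_nonneg (f' U)]
  have hsq : ‖U‖ ^ 2 ≤ (‖G‖ + 1) ^ 2 * ‖f' U‖ ^ 2 := by
    rw [← mul_pow]
    exact pow_le_pow_left₀ (norm_nonneg _) hnorm 2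
  have hUn : ‖U‖ ^ 2 = ∑ i, u i ^ 2 := by
    rw [EuclideanSpace.norm_eq, Real.sq_sqrt (by positivity)]
    refine Finset.sum_congr rfl fun i _ => ?_
    rw [Real.norm_eq_abs, sq_abs]
    rfl
  have hFn : ‖f' U‖ ^ 2 = ∑ r, f u r ^ 2 := by
    rw [EuclideanSpace.norm_eq, Real.sq_sqrt (by positivity)]
    refine Finset.sum_congr rfl fun r _ => ?_
    rw [Real.norm_eq_abs, sq_abs]
    have : f' U = (WithLp.linearEquiv 2 ℝ (ι → ℝ)).symm (f u) := by
      simp [f', hU]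
      rfl
    rw [this]
    rfl
  rw [← hUn, ← hFn]
  exact hsq

lemma injective_of_rank_eq {n : ℕ} {ι : Type*} [Fintype ι] (O : Matrix ι (Fin n) ℝ)
    (h : O.rank = n) : Function.Injective O.mulVecLin := by
  rw [← LinearMap.ker_eq_bot]
  have h1 := O.mulVecLin.finrank_range_add_finrank_ker
  have h2 : Module.finrank ℝ (LinearMap.range O.mulVecLin) = n := h
  have h3 : Module.finrank ℝ (Fin n → ℝ) = n := by simp
  have h4 : Module.finrank ℝ (LinearMap.ker O.mulVecLin) = 0 := by omega
  exact Submodule.finrank_eq_zero.mp h4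

lemma surjective_of_rank_eq {n : ℕ} (A : Matrix (Fin n) (Fin n) ℝ)
    (h : A.rank = n) : Function.Surjective A.mulVecLin := by
  rw [← LinearMap.range_eq_top]
  apply Submodule.eq_top_of_finrank_eq
  rw [show Module.finrank ℝ (LinearMap.range A.mulVecLin) = A.rank from rfl, h]
  simp

lemma surjective_pow {n : ℕ} (A : Matrix (Fin n) (Fin n) ℝ)
    (h : Function.Surjective A.mulVecLin) (k : ℕ) :
    Function.Surjective (A ^ k).mulVecLin := by
  induction k with
  | zero => intro y; exact ⟨y, by simp⟩
  | succ k ih =>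
    intro y
    obtain ⟨z, hz⟩ := ih y
    obtain ⟨x, hx⟩ := h z
    refine ⟨x, ?_⟩
    simp only [Matrix.mulVecLin_apply] at *
    rw [pow_succ, ← Matrix.mulVec_mulVec, hx, hz]

lemma iterate_err {n : ℕ} (A : Matrix (Fin n) (Fin n) ℝ) (e v : ℕ → Fin n → ℝ)
    (he : ∀ t, e (t + 1) = A.mulVec (e t) + v t) (s : ℕ) : ∀ r : ℕ,
    e (s + r) = (A ^ r).mulVec (e s)
      + ∑ l ∈ Finset.range r, (A ^ (r - 1 - l)).mulVec (v (s + l)) := by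
  intro r
  induction r with
  | zero => simp
  | succ r ih =>
    have hstep : s + (r + 1) = (s + r) + 1 := by ring
    rw [hstep, he (s + r), ih, Matrix.mulVec_add, Matrix.mulVec_mulVec, ← pow_succ']
    have hmap : A.mulVec (∑ l ∈ Finset.range r, (A ^ (r - 1 - l)).mulVec (v (s + l)))
        = ∑ l ∈ Finset.range r, A.mulVec ((A ^ (r - 1 - l)).mulVec (v (s + l))) :=
      map_sum A.mulVecLin (fun l => (A ^ (r - 1 - l)).mulVec (v (s + l))) (Finset.range r)
    rw [hmap]
    have hterm : ∀ l ∈ Finset.range r, A.mulVec ((A ^ (r - 1 - l)).mulVec (v (s + l)))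
        = (A ^ (r + 1 - 1 - l)).mulVec (v (s + l)) := by
      intro l hl
      rw [Matrix.mulVec_mulVec, ← pow_succ']
      have : r - 1 - l + 1 = r + 1 - 1 - l := by
        have := Finset.mem_range.mp hl; omega
      rw [this]
    rw [Finset.sum_congr rfl hterm, Finset.sum_range_succ]
    have hlast : (A ^ (r + 1 - 1 - r)).mulVec (v (s + r)) = v (s + r) := by
      have : r + 1 - 1 - r = 0 := by omega
      rw [this, pow_zero, Matrix.one_mulVec]
    rw [hlast]
    abel

lemma sampleSet_unshift {d : ℕ → ℕ} {i s : ℕ} (hs : s ∈ sampleSet d 0)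
    (h : ∑ l ∈ Finset.range i, d l < s) : s - ∑ l ∈ Finset.range i, d l ∈ sampleSet d i := by
  obtain ⟨m, hm⟩ := hs
  simp only [zero_add] at hm
  by_cases hmi : m + 1 ≤ i
  · exfalso
    have : s ≤ ∑ l ∈ Finset.range i, d l := by
      rw [hm]
      exact Finset.sum_le_sum_of_subset (Finset.range_subset_range.mpr hmi)
    omega
  · push_neg at hmi
    have hi : i ≤ m := by omega
    refine ⟨m - i, ?_⟩
    have hsplit : m + 1 = i + (m - i + 1) := by omega
    rw [hm, hsplit, Finset.sum_range_add]
    omega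

lemma posDef_smul_one {k : ℕ} {c : ℝ} (hc : 0 < c) :
    (c • (1 : Matrix (Fin k) (Fin k) ℝ)).PosDef := by
  rw [Matrix.posDef_iff_dotProduct_mulVec]
  constructor
  · unfold Matrix.IsHermitian
    simp [Matrix.conjTranspose_smul]
  · intro x hx
    have h1 : (c • (1 : Matrix (Fin k) (Fin k) ℝ)).mulVec x = c • x := by
      rw [Matrix.smul_mulVec, Matrix.one_mulVec]
    rw [h1]
    simp only [star_trivial]
    have h2 : dotProduct x (c • x) = c * ∑ i, x i * x i := by
      rw [dotProduct_smul]
      simp [dotProduct, Finset.mul_sum]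
    rw [h2]
    have h3 : 0 < ∑ i, x i * x i := by
      obtain ⟨i, hi⟩ := Function.ne_iff.mp hx
      exact Finset.sum_pos' (fun j _ => mul_self_nonneg _)
        ⟨i, Finset.mem_univ i, mul_self_pos.mpr (by simpa using hi)⟩
    positivity

lemma posSemidef_smul_one {k : ℕ} {c : ℝ} (hc : 0 ≤ c) :
    (c • (1 : Matrix (Fin k) (Fin k) ℝ)).PosSemidef := by
  rw [Matrix.posSemidef_iff_dotProduct_mulVec]
  constructor
  · unfold Matrix.IsHermitian
    simp [Matrix.conjTranspose_smul]
  · intro x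
    have h1 : (c • (1 : Matrix (Fin k) (Fin k) ℝ)).mulVec x = c • x := by
      rw [Matrix.smul_mulVec, Matrix.one_mulVec]
    rw [h1]
    simp only [star_trivial]
    have h2 : dotProduct x (c • x) = c * ∑ i, x i * x i := by
      rw [dotProduct_smul]
      simp [dotProduct, Finset.mul_sum]
    rw [h2]
    have h3 : 0 ≤ ∑ i, x i * x i := Finset.sum_nonneg (fun j _ => mul_self_nonneg _)
    positivity

lemma normSq_smul_one {k : ℕ} (c : ℝ) (v : Fin k → ℝ) :
    normSq (c • (1 : Matrix (Fin k) (Fin k) ℝ)) v = c * ∑ i, v i ^ 2 := by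
  unfold normSq
  rw [Matrix.smul_mulVec, Matrix.one_mulVec, dotProduct_smul]
  simp [dotProduct, Finset.mul_sum, sq]

lemma le_half_pow {k m : ℕ} (hk : k ≤ m) {c c' X : ℝ} (hcc : (2 : ℝ) ^ m * c ≤ c')
    (hc : 0 ≤ c) (hX : 0 ≤ X) : c * X ≤ (1 / 2 : ℝ) ^ k * (c' * X) := by
  have h1 : (2 : ℝ) ^ k ≤ 2 ^ m := pow_le_pow_right₀ (by norm_num) hk
  have hpk : (0 : ℝ) < 2 ^ k := by positivity
  have h2 : ((1 : ℝ) / 2) ^ k = ((2 : ℝ) ^ k)⁻¹ := by rw [one_div, inv_pow]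
  rw [h2, ← div_eq_inv_mul, le_div_iff₀ hpk]
  nlinarith [mul_le_mul_of_nonneg_right (mul_le_mul_of_nonneg_right h1 hc) hX,
    mul_le_mul_of_nonneg_right hcc hX]

/-- the matrix with block rows `C A^r`, `r ∈ S` -/
def relM {n p : ℕ} (A : Matrix (Fin n) (Fin n) ℝ) (C : Matrix (Fin p) (Fin n) ℝ)
    (S : Finset ℕ) : Matrix ({x // x ∈ S} × Fin p) (Fin n) ℝ :=
  Matrix.of fun rq l => (C * A ^ (rq.1 : ℕ)) rq.2 l

section Main

variable {n p : ℕ} (A : Matrix (Fin n) (Fin n) ℝ) (C : Matrix (Fin p) (Fin n) ℝ)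
  (d : ℕ → ℕ) (T : ℕ)
  (hrank : ∀ t, T < t →
      (Matrix.of fun (ri : ((Finset.Icc (t - T - 1) (t - 1)).filter
          (· ∈ sampleSet d 0) : Finset ℕ) × Fin p) (j : Fin n) =>
        (C * A ^ (ri.1 : ℕ)) ri.2 j).rank = n)

include hrank in
lemma A_surjective : Function.Surjective A.mulVecLin := by
  apply surjective_of_rank_eq
  have h0 := hrank (T + 2) (by omega)
  set O₀ := (Matrix.of fun (ri : ((Finset.Icc (T + 2 - T - 1) (T + 2 - 1)).filter
      (· ∈ sampleSet d 0) : Finset ℕ) × Fin p) (j : Fin n) =>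
    (C * A ^ (ri.1 : ℕ)) ri.2 j) with hO₀
  set O'' := (Matrix.of fun (ri : ((Finset.Icc (T + 2 - T - 1) (T + 2 - 1)).filter
      (· ∈ sampleSet d 0) : Finset ℕ) × Fin p) (j : Fin n) =>
    (C * A ^ ((ri.1 : ℕ) - 1)) ri.2 j) with hO''
  have hfact : O₀ = O'' * A := by
    ext rq l
    have hmem := rq.1.2
    rw [Finset.mem_filter, Finset.mem_Icc] at hmem
    have h1 : 1 ≤ (rq.1 : ℕ) := by omega
    have hpow : (A : Matrix (Fin n) (Fin n) ℝ) ^ (rq.1 : ℕ) = A ^ ((rq.1 : ℕ) - 1) * A := by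
      rw [← pow_succ]
      congr 1
      omega
    show (C * A ^ (rq.1 : ℕ)) rq.2 l = (O'' * A) rq l
    rw [hpow, ← Matrix.mul_assoc]
    rfl
  have hle : O₀.rank ≤ A.rank := by
    rw [hfact]
    exact Matrix.rank_mul_le_right O'' A
  have hge : A.rank ≤ n := by
    have := Matrix.rank_le_card_width A
    simpa using this
  omega

include hrank in
lemma relM_injective (hAsurj : Function.Surjective A.mulVecLin) (t i : ℕ) (ht : T + 2 ≤ t) :
    Function.Injective (relM A C (((Finset.Icc (t - T - 1) (t - 1)).filter
      (· ∈ sampleSet d i)).image (· - (t - T - 1)))).mulVecLin := by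
  set s0 := t - T - 1 with hs0
  set W := (Finset.Icc s0 (t - 1)).filter (· ∈ sampleSet d i) with hW
  set S := W.image (· - s0) with hS
  rw [← LinearMap.ker_eq_bot, LinearMap.ker_eq_bot']
  intro u h0
  set Di := ∑ l ∈ Finset.range i, d l with hDi
  set t' := t + Di with ht'
  have hTt' : T < t' := by omega
  have hrk := hrank t' hTt'
  have hinj := injective_of_rank_eq _ hrk
  obtain ⟨eε, heε⟩ := surjective_pow A hAsurj (t' - T - 1) u
  have hzero : (Matrix.of fun (ri : ((Finset.Icc (t' - T - 1) (t' - 1)).filter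
      (· ∈ sampleSet d 0) : Finset ℕ) × Fin p) (j : Fin n) =>
      (C * A ^ ((ri.1 : ℕ))) ri.2 j).mulVecLin eε = 0 := by
    funext rq
    have hmem := rq.1.2
    rw [Finset.mem_filter, Finset.mem_Icc] at hmem
    obtain ⟨⟨hj1, hj2⟩, hjK⟩ := hmem
    set j' := (rq.1 : ℕ) with hj'
    have hDlt : Di < j' := by omega
    have hjK' : j' - Di ∈ sampleSet d i := sampleSet_unshift hjK hDlt
    have hjW : j' - Di ∈ W := by
      rw [hW, Finset.mem_filter, Finset.mem_Icc]
      refine ⟨⟨by omega, by omega⟩, hjK'⟩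
    have hr : j' - Di - s0 ∈ S := by
      rw [hS]
      exact Finset.mem_image_of_mem _ hjW
    set r := j' - Di - s0 with hrdef
    have hrow : ((C * A ^ r).mulVec u) rq.2 = 0 := by
      have := congrFun h0 (⟨⟨r, hr⟩, rq.2⟩ : {x // x ∈ S} × Fin p)
      simpa [relM, Matrix.mulVecLin_apply, Matrix.mulVec, dotProduct] using this
    show ((C * A ^ j').mulVec eε) rq.2 = 0
    have hj'eq : j' = r + (t' - T - 1) := by omega
    rw [hj'eq, pow_add]
    have hsplit : (C * (A ^ r * A ^ (t' - T - 1))).mulVec eε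
        = (C * A ^ r).mulVec ((A ^ (t' - T - 1)).mulVec eε) := by
      rw [Matrix.mulVec_mulVec, Matrix.mul_assoc]
    rw [hsplit]
    have hu : (A ^ (t' - T - 1)).mulVec eε = u := heε
    rw [hu]
    exact hrow
  have heε0 : eε = 0 := by
    apply hinj
    rw [hzero, map_zero]
  rw [← heε, heε0]
  simp

include hrank in
lemma key_exists :
    ∃ β q ρ : ℝ, 0 < β ∧ 0 < q ∧ 0 < ρ ∧
      ∀ (e v : ℕ → Fin n → ℝ), (∀ s, e (s + 1) = A.mulVec (e s) + v s) →
      ∀ t i : ℕ,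
        sqv (e t) ≤ (1 / 2 : ℝ) ^ t * (β * sqv (e 0))
          + ∑ j ∈ Finset.range t, (1 / 2 : ℝ) ^ (t - j - 1) * (q * sqv (v j))
          + ∑ j ∈ Finset.range t, Set.indicator (sampleSet d i)
              (fun j => (1 / 2 : ℝ) ^ (t - j - 1) * (ρ * sqv (C.mulVec (e j)))) j := by
  classical
  have hAsurj := A_surjective A C d T hrank
  -- quantitative observability constants, per offset pattern
  have hex : ∀ S : Finset ℕ, ∃ c : ℝ, 0 < c ∧
      (Function.Injective (relM A C S).mulVecLin →
        ∀ u : Fin n → ℝ, sqv u ≤ c * ∑ rq, ((relM A C S).mulVecLin u rq) ^ 2) := by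
    intro S
    by_cases hSi : Function.Injective (relM A C S).mulVecLin
    · obtain ⟨c, hc, hb⟩ := exists_bound (relM A C S).mulVecLin hSi
      exact ⟨c, hc, fun _ u => by simpa [sqv] using hb u⟩
    · exact ⟨1, one_pos, fun h => absurd h hSi⟩
  choose cS hcS1 hcS2 using hex
  set cmax := ∑ S ∈ (Finset.range (T + 1)).powerset, cS S with hcmax
  have hcmax_pos : 0 < cmax :=
    Finset.sum_pos (fun S _ => hcS1 S) ⟨∅, by simp⟩
  have hcmax_le : ∀ S ∈ (Finset.range (T + 1)).powerset, cS S ≤ cmax := fun S hS =>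
    Finset.single_le_sum (fun S _ => (hcS1 S).le) hS
  set a := (∑ k ∈ Finset.range (T + 2), frob (A ^ k)) + 1 with ha
  have ha1 : (1 : ℝ) ≤ a := by
    have : 0 ≤ ∑ k ∈ Finset.range (T + 2), frob (A ^ k) :=
      Finset.sum_nonneg fun k _ => frob_nonneg _
    rw [ha]; linarith
  have ha0 : (0 : ℝ) < a := by linarith
  have hak : ∀ k, k ≤ T + 1 → frob (A ^ k) ≤ a := by
    intro k hk
    have h1 : frob (A ^ k) ≤ ∑ k ∈ Finset.range (T + 2), frob (A ^ k) :=
      Finset.single_le_sum (fun k _ => frob_nonneg _) (Finset.mem_range.mpr (by omega))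
    rw [ha]; linarith
  set fC := frob C + 1 with hfC
  have hfC1 : (1 : ℝ) ≤ fC := by have := frob_nonneg C; rw [hfC]; linarith
  have hfC0 : (0 : ℝ) < fC := by linarith
  have hfCle : frob C ≤ fC := by rw [hfC]; linarith
  set ρ0 := 4 * a * cmax with hρ0
  set q0 := 4 * a ^ 2 * cmax * fC * ((T : ℝ) + 1) ^ 2 + 2 * ((T : ℝ) + 1) * a with hq0
  set β := (2 : ℝ) ^ (T + 1) * (2 * a) with hβ
  set q := (2 : ℝ) ^ T * (2 * ((T : ℝ) + 1) * a) + (2 : ℝ) ^ T * q0 with hq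
  set ρ := (2 : ℝ) ^ T * ρ0 with hρ
  have hT1 : (0 : ℝ) < (T : ℝ) + 1 := by positivity
  have hρ0pos : 0 < ρ0 := by
    rw [hρ0]
    exact mul_pos (mul_pos (by norm_num) ha0) hcmax_pos
  have hq0A : 0 < 4 * a ^ 2 * cmax * fC * ((T : ℝ) + 1) ^ 2 :=
    mul_pos (mul_pos (mul_pos (mul_pos (by norm_num) (pow_pos ha0 2)) hcmax_pos) hfC0)
      (pow_pos hT1 2)
  have hq0B : 0 < 2 * ((T : ℝ) + 1) * a := mul_pos (mul_pos (by norm_num) hT1) ha0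
  have hq0pos : 0 < q0 := by rw [hq0]; linarith
  have htwoT : (0 : ℝ) < (2 : ℝ) ^ T := pow_pos (by norm_num) T
  have htwoT1 : (0 : ℝ) < (2 : ℝ) ^ (T + 1) := pow_pos (by norm_num) (T + 1)
  have hβpos : 0 < β := by
    rw [hβ]
    exact mul_pos htwoT1 (by linarith)
  have hqpos : 0 < q := by
    rw [hq]
    have h1 := mul_pos htwoT hq0B
    have h2 := mul_pos htwoT hq0pos
    linarith
  have hρpos : 0 < ρ := by
    rw [hρ]
    exact mul_pos htwoT hρ0pos
  clear_value cmax a fC ρ0 q0 β q ρ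
  refine ⟨β, q, ρ, hβpos, hqpos, hρpos, ?_⟩
  intro e v he t i
  have hind_nonneg : ∀ j : ℕ, 0 ≤ Set.indicator (sampleSet d i)
      (fun j => (1 / 2 : ℝ) ^ (t - j - 1) * (ρ * sqv (C.mulVec (e j)))) j :=
    fun j => Set.indicator_nonneg
      (fun j _ => mul_nonneg (by positivity) (mul_nonneg hρpos.le (sqv_nonneg _))) j
  have hterm1_nonneg : 0 ≤ (1 / 2 : ℝ) ^ t * (β * sqv (e 0)) :=
    mul_nonneg (by positivity) (mul_nonneg hβpos.le (sqv_nonneg _))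
  by_cases hcase : t ≤ T + 1
  · -- small times: direct bound
    have hiter := iterate_err A e v he 0 t
    simp only [zero_add] at hiter
    have b1 : sqv ((A ^ t).mulVec (e 0)) ≤ a * sqv (e 0) :=
      (sqv_mulVec_le _ _).trans
        (mul_le_mul_of_nonneg_right (hak t (by omega)) (sqv_nonneg _))
    have b2 : sqv (∑ l ∈ Finset.range t, (A ^ (t - 1 - l)).mulVec (v l))
        ≤ ((T : ℝ) + 1) * ∑ l ∈ Finset.range t, a * sqv (v l) := by
      refine (sqv_finsum_le _ _).trans ?_
      have b3 : ∑ l ∈ Finset.range t, sqv ((A ^ (t - 1 - l)).mulVec (v l))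
          ≤ ∑ l ∈ Finset.range t, a * sqv (v l) :=
        Finset.sum_le_sum fun l hl => (sqv_mulVec_le _ _).trans
          (mul_le_mul_of_nonneg_right (hak _ (by omega)) (sqv_nonneg _))
      have hcard : (((Finset.range t).card : ℕ) : ℝ) ≤ (T : ℝ) + 1 := by
        rw [Finset.card_range]
        exact_mod_cast hcase
      refine mul_le_mul hcard b3 ?_ (by positivity)
      exact Finset.sum_nonneg fun l _ => sqv_nonneg _
    have step : sqv (e t) ≤ 2 * (a * sqv (e 0))
        + 2 * (((T : ℝ) + 1) * ∑ l ∈ Finset.range t, a * sqv (v l)) := by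
      rw [hiter]
      have := sqv_add_le ((A ^ t).mulVec (e 0))
        (∑ l ∈ Finset.range t, (A ^ (t - 1 - l)).mulVec (v l))
      linarith [this, b1, b2]
    -- compare with the RHS
    have cmp1 : 2 * (a * sqv (e 0)) ≤ (1 / 2 : ℝ) ^ t * (β * sqv (e 0)) := by
      have := le_half_pow (c := 2 * a) (c' := β) (X := sqv (e 0)) hcase
        (by rw [hβ]) (by linarith) (sqv_nonneg _)
      linarith [this]
    have cmp2 : 2 * (((T : ℝ) + 1) * ∑ l ∈ Finset.range t, a * sqv (v l))
        ≤ ∑ j ∈ Finset.range t, (1 / 2 : ℝ) ^ (t - j - 1) * (q * sqv (v j)) := by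
      have hrew : 2 * (((T : ℝ) + 1) * ∑ l ∈ Finset.range t, a * sqv (v l))
          = ∑ l ∈ Finset.range t, (2 * ((T : ℝ) + 1) * a) * sqv (v l) := by
        rw [Finset.mul_sum, Finset.mul_sum]
        exact Finset.sum_congr rfl fun l _ => by ring
      rw [hrew]
      refine Finset.sum_le_sum fun l hl => ?_
      have hexp : t - l - 1 ≤ T := by omega
      refine le_half_pow hexp ?_ hq0B.le (sqv_nonneg _)
      rw [hq]
      have h2 := mul_pos htwoT hq0pos
      linarith
    have hdrop : 0 ≤ ∑ j ∈ Finset.range t, Set.indicator (sampleSet d i)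
        (fun j => (1 / 2 : ℝ) ^ (t - j - 1) * (ρ * sqv (C.mulVec (e j)))) j :=
      Finset.sum_nonneg fun j _ => hind_nonneg j
    linarith [step, cmp1, cmp2, hdrop]
  · -- large times: use the observability window
    push_neg at hcase
    set s0 := t - T - 1 with hs0def
    have hts0 : t = s0 + (T + 1) := by omega
    set W := (Finset.Icc s0 (t - 1)).filter (· ∈ sampleSet d i) with hWdef
    set S := W.image (· - s0) with hSdef
    have hWmem : ∀ j ∈ W, (s0 ≤ j ∧ j ≤ t - 1) ∧ j ∈ sampleSet d i := by
      intro j hj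
      rw [hWdef, Finset.mem_filter, Finset.mem_Icc] at hj
      exact hj
    have hS𝒫 : S ∈ (Finset.range (T + 1)).powerset := by
      rw [Finset.mem_powerset]
      intro r hr
      rw [hSdef, Finset.mem_image] at hr
      obtain ⟨j, hjW, hjr⟩ := hr
      obtain ⟨⟨h1, h2⟩, _⟩ := hWmem j hjW
      rw [Finset.mem_range]
      omega
    have hinjS : Function.Injective (relM A C S).mulVecLin := by
      have := relM_injective A C d T hrank hAsurj t i (by omega)
      rw [hSdef, hWdef, hs0def]
      exact this
    set u0 := e s0 with hu0def
    set Sv := ∑ l ∈ Finset.range (T + 1), sqv (v (s0 + l)) with hSv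
    have hSv0 : 0 ≤ Sv := Finset.sum_nonneg fun l _ => sqv_nonneg _
    set Z := ∑ j ∈ W, sqv (C.mulVec (e j)) with hZ
    have hZ0 : 0 ≤ Z := Finset.sum_nonneg fun j _ => sqv_nonneg _
    clear_value u0 Sv Z
    -- rows of the sampled observability map, re-expressed over W
    have hrows : ∑ rq : {x // x ∈ S} × Fin p, ((relM A C S).mulVecLin u0 rq) ^ 2
        = ∑ j ∈ W, sqv (C.mulVec ((A ^ (j - s0)).mulVec u0)) := by
      rw [Fintype.sum_prod_type]
      have h1 : ∀ r : {x // x ∈ S},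
          ∑ b : Fin p, ((relM A C S).mulVecLin u0 (r, b)) ^ 2
            = sqv (C.mulVec ((A ^ (r : ℕ)).mulVec u0)) := by
        intro r
        unfold sqv
        refine Finset.sum_congr rfl fun b _ => ?_
        have : (relM A C S).mulVecLin u0 (r, b) = ((C * A ^ (r : ℕ)).mulVec u0) b := rfl
        rw [this, ← Matrix.mulVec_mulVec]
      rw [Finset.sum_congr rfl (fun r _ => h1 r)]
      rw [Finset.sum_coe_sort S (fun r => sqv (C.mulVec ((A ^ r).mulVec u0)))]
      rw [hSdef]
      refine Finset.sum_image ?_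
      intro j hj j' hj' hE
      obtain ⟨⟨haj, _⟩, _⟩ := hWmem j hj
      obtain ⟨⟨hb, _⟩, _⟩ := hWmem j' hj'
      dsimp only at hE
      omega
    -- per-row bound
    have hrowbound : ∀ j ∈ W, sqv (C.mulVec ((A ^ (j - s0)).mulVec u0))
        ≤ 2 * sqv (C.mulVec (e j)) + 2 * (fC * (((T : ℝ) + 1) * (a * Sv))) := by
      intro j hjW
      obtain ⟨⟨hj1, hj2⟩, _⟩ := hWmem j hjW
      have hiter := iterate_err A e v he s0 (j - s0)
      rw [show s0 + (j - s0) = j by omega] at hiter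
      have hzrel : C.mulVec ((A ^ (j - s0)).mulVec u0)
          = C.mulVec (e j) - C.mulVec (∑ l ∈ Finset.range (j - s0),
              (A ^ (j - s0 - 1 - l)).mulVec (v (s0 + l))) := by
        rw [hiter, Matrix.mulVec_add, hu0def]
        abel
      rw [hzrel]
      refine (sqv_sub_le _ _).trans ?_
      have hF : sqv (C.mulVec (∑ l ∈ Finset.range (j - s0),
          (A ^ (j - s0 - 1 - l)).mulVec (v (s0 + l)))) ≤ fC * (((T : ℝ) + 1) * (a * Sv)) := by
        refine (sqv_mulVec_le _ _).trans ?_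
        have hFin : sqv (∑ l ∈ Finset.range (j - s0), (A ^ (j - s0 - 1 - l)).mulVec (v (s0 + l)))
            ≤ ((T : ℝ) + 1) * (a * Sv) := by
          refine (sqv_finsum_le _ _).trans ?_
          have hsum1 : ∑ l ∈ Finset.range (j - s0), sqv ((A ^ (j - s0 - 1 - l)).mulVec (v (s0 + l)))
              ≤ a * Sv := by
            have hstep1 : ∑ l ∈ Finset.range (j - s0), sqv ((A ^ (j - s0 - 1 - l)).mulVec (v (s0 + l)))
                ≤ ∑ l ∈ Finset.range (j - s0), a * sqv (v (s0 + l)) :=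
              Finset.sum_le_sum fun l hl => (sqv_mulVec_le _ _).trans
                (mul_le_mul_of_nonneg_right (hak _ (by omega)) (sqv_nonneg _))
            have hstep2 : ∑ l ∈ Finset.range (j - s0), a * sqv (v (s0 + l))
                ≤ ∑ l ∈ Finset.range (T + 1), a * sqv (v (s0 + l)) := by
              refine Finset.sum_le_sum_of_subset_of_nonneg ?_ ?_
              · refine Finset.range_subset_range.mpr ?_
                omega
              · intro l _ _
                exact mul_nonneg ha0.le (sqv_nonneg _)
            have hstep3 : ∑ l ∈ Finset.range (T + 1), a * sqv (v (s0 + l)) = a * Sv := by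
              rw [hSv, Finset.mul_sum]
            linarith
          have hcard : (((Finset.range (j - s0)).card : ℕ) : ℝ) ≤ (T : ℝ) + 1 := by
            rw [Finset.card_range]
            have : j - s0 ≤ T := by omega
            exact_mod_cast Nat.le_succ_of_le this
          refine mul_le_mul hcard hsum1 ?_ (by positivity)
          exact Finset.sum_nonneg fun l _ => sqv_nonneg _
        calc frob C * sqv (∑ l ∈ Finset.range (j - s0), (A ^ (j - s0 - 1 - l)).mulVec (v (s0 + l)))
            ≤ fC * sqv (∑ l ∈ Finset.range (j - s0), (A ^ (j - s0 - 1 - l)).mulVec (v (s0 + l))) :=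
              mul_le_mul_of_nonneg_right hfCle (sqv_nonneg _)
          _ ≤ fC * (((T : ℝ) + 1) * (a * Sv)) := mul_le_mul_of_nonneg_left hFin hfC0.le
      nlinarith [hF, sqv_nonneg (C.mulVec (e j))]
    -- reconstruction bound for the state at the start of the window
    have hcardW : ((W.card : ℕ) : ℝ) ≤ (T : ℝ) + 1 := by
      have h1 : W.card ≤ (Finset.Icc s0 (t - 1)).card := by
        rw [hWdef]
        exact Finset.card_filter_le _ _
      rw [Nat.card_Icc] at h1
      have h2 : W.card ≤ T + 1 := by omega
      exact_mod_cast h2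
    set K := 2 * (fC * (((T : ℝ) + 1) * (a * Sv))) with hK
    have hK0 : 0 ≤ K := by
      rw [hK]
      exact mul_nonneg (by norm_num) (mul_nonneg hfC0.le (mul_nonneg hT1.le
        (mul_nonneg ha0.le hSv0)))
    have hu0 : sqv u0 ≤ cmax * (2 * Z + ((T : ℝ) + 1) * K) := by
      have h1 := hcS2 S hinjS u0
      rw [hrows] at h1
      have h2 : ∑ j ∈ W, sqv (C.mulVec ((A ^ (j - s0)).mulVec u0))
          ≤ 2 * Z + ((T : ℝ) + 1) * K := by
        have h3 : ∑ j ∈ W, sqv (C.mulVec ((A ^ (j - s0)).mulVec u0))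
            ≤ ∑ j ∈ W, (2 * sqv (C.mulVec (e j)) + K) := by
          refine Finset.sum_le_sum fun j hj => ?_
          have := hrowbound j hj
          rw [hK]
          linarith
        have h4 : ∑ j ∈ W, (2 * sqv (C.mulVec (e j)) + K) = 2 * Z + (W.card : ℝ) * K := by
          rw [Finset.sum_add_distrib, Finset.sum_const, ← Finset.mul_sum, hZ, nsmul_eq_mul]
        have h5 : (W.card : ℝ) * K ≤ ((T : ℝ) + 1) * K := mul_le_mul_of_nonneg_right hcardW hK0
        linarith
      calc sqv u0 ≤ cS S * ∑ j ∈ W, sqv (C.mulVec ((A ^ (j - s0)).mulVec u0)) := h1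
        _ ≤ cmax * ∑ j ∈ W, sqv (C.mulVec ((A ^ (j - s0)).mulVec u0)) :=
            mul_le_mul_of_nonneg_right (hcmax_le S hS𝒫)
              (Finset.sum_nonneg fun j _ => sqv_nonneg _)
        _ ≤ cmax * (2 * Z + ((T : ℝ) + 1) * K) := mul_le_mul_of_nonneg_left h2 hcmax_pos.le
    -- propagate to time t
    have hiterT := iterate_err A e v he s0 (T + 1)
    rw [← hts0] at hiterT
    have het : sqv (e t) ≤ 2 * (a * sqv u0) + 2 * (((T : ℝ) + 1) * (a * Sv)) := by
      rw [hiterT]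
      have hadd := sqv_add_le ((A ^ (T + 1)).mulVec (e s0))
        (∑ l ∈ Finset.range (T + 1), (A ^ (T + 1 - 1 - l)).mulVec (v (s0 + l)))
      have b1 : sqv ((A ^ (T + 1)).mulVec (e s0)) ≤ a * sqv u0 := by
        rw [hu0def]
        exact (sqv_mulVec_le _ _).trans
          (mul_le_mul_of_nonneg_right (hak _ (by omega)) (sqv_nonneg _))
      have b2 : sqv (∑ l ∈ Finset.range (T + 1), (A ^ (T + 1 - 1 - l)).mulVec (v (s0 + l)))
          ≤ ((T : ℝ) + 1) * (a * Sv) := by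
        refine (sqv_finsum_le _ _).trans ?_
        have hsum1 : ∑ l ∈ Finset.range (T + 1), sqv ((A ^ (T + 1 - 1 - l)).mulVec (v (s0 + l)))
            ≤ a * Sv := by
          have := Finset.sum_le_sum (f := fun l => sqv ((A ^ (T + 1 - 1 - l)).mulVec (v (s0 + l))))
            (g := fun l => a * sqv (v (s0 + l))) (s := Finset.range (T + 1))
            (fun l hl => (sqv_mulVec_le _ _).trans
              (mul_le_mul_of_nonneg_right (hak _ (by omega)) (sqv_nonneg _)))
          rw [hSv, Finset.mul_sum]
          exact this
        have hcard : (((Finset.range (T + 1)).card : ℕ) : ℝ) ≤ (T : ℝ) + 1 := by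
          rw [Finset.card_range]
          norm_num
        refine mul_le_mul hcard hsum1 ?_ (by positivity)
        exact Finset.sum_nonneg fun l _ => sqv_nonneg _
      linarith [hadd, b1, b2]
    -- combine
    have hcomb : sqv (e t) ≤ ρ0 * Z + q0 * Sv := by
      have h1 : a * sqv u0 ≤ a * (cmax * (2 * Z + ((T : ℝ) + 1) * K)) :=
        mul_le_mul_of_nonneg_left hu0 ha0.le
      have h2 : 2 * (a * (cmax * (2 * Z + ((T : ℝ) + 1) * K)))
          + 2 * (((T : ℝ) + 1) * (a * Sv)) = ρ0 * Z + q0 * Sv := by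
        rw [hρ0, hq0, hK]
        ring
      linarith only [het, h1, h2]
    -- lower bound on the indicator sum
    have hWrange : W ⊆ Finset.range t := by
      intro j hj
      obtain ⟨⟨h1, h2⟩, _⟩ := hWmem j hj
      rw [Finset.mem_range]
      omega
    have h3sum : ρ0 * Z ≤ ∑ j ∈ Finset.range t, Set.indicator (sampleSet d i)
        (fun j => (1 / 2 : ℝ) ^ (t - j - 1) * (ρ * sqv (C.mulVec (e j)))) j := by
      refine le_trans ?_ (Finset.sum_le_sum_of_subset_of_nonneg hWrange
        (fun j _ _ => hind_nonneg j))
      rw [hZ, Finset.mul_sum]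
      refine Finset.sum_le_sum fun j hj => ?_
      obtain ⟨⟨hj1, hj2⟩, hjK⟩ := hWmem j hj
      rw [Set.indicator_of_mem hjK]
      have hexp : t - j - 1 ≤ T := by omega
      refine le_half_pow hexp ?_ hρ0pos.le (sqv_nonneg _)
      rw [hρ]
    -- lower bound on the disturbance sum
    have h2sum : q0 * Sv ≤ ∑ j ∈ Finset.range t,
        (1 / 2 : ℝ) ^ (t - j - 1) * (q * sqv (v j)) := by
      have himg : (Finset.range (T + 1)).image (fun l => s0 + l) ⊆ Finset.range t := by
        intro j hj
        rw [Finset.mem_image] at hj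
        obtain ⟨l, hl, hlj⟩ := hj
        rw [Finset.mem_range] at hl ⊢
        omega
      refine le_trans ?_ (Finset.sum_le_sum_of_subset_of_nonneg himg
        (fun j _ _ => mul_nonneg (by positivity) (mul_nonneg hqpos.le (sqv_nonneg _))))
      rw [Finset.sum_image (fun a _ b _ h => by omega)]
      rw [hSv, Finset.mul_sum]
      refine Finset.sum_le_sum fun l hl => ?_
      have hexp : t - (s0 + l) - 1 ≤ T := by omega
      refine le_half_pow hexp ?_ hq0pos.le (sqv_nonneg _)
      rw [hq]
      have h2 := mul_pos htwoT hq0B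
      linarith only [h2]
    linarith only [hcomb, h3sum, h2sum, hterm1_nonneg]


end Main
end SampleIIOSSAux

/-- Theorem 2 of the paper. If there is a finite `T` such that for every
`t > T` the sample-based observability matrix with time indices in `K_1 ∩ [t−T−1, t−1]`
(stacked block rows `C A^s`) has full column rank `n`, then the linear system is
sample-based exponentially i-IOSS with respect to `K`. -/
theorem sampleBased_observability_implies_sampleBased_iIOSS
    (n m p : ℕ) (A : Matrix (Fin n) (Fin n) ℝ) (B : Matrix (Fin n) (Fin m) ℝ)
    (C : Matrix (Fin p) (Fin n) ℝ) (D : Matrix (Fin p) (Fin m) ℝ)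
    (d : ℕ → ℕ) (dmax : ℕ) (hd : ∀ i, d i ≤ dmax)
    (T : ℕ)
    (hrank : ∀ t, T < t →
      (Matrix.of fun (ri : ((Finset.Icc (t - T - 1) (t - 1)).filter
          (· ∈ sampleSet d 0) : Finset ℕ) × Fin p) (j : Fin n) =>
        (C * A ^ (ri.1 : ℕ)) ri.2 j).rank = n) :
    sampleBasedExpIIOSS A B C D d := by
  classical
  obtain ⟨β, q, ρ, hβpos, hqpos, hρpos, H⟩ := SampleIIOSSAux.key_exists A C d T hrank
  refine ⟨(1 : ℝ) • 1, β • 1, q • 1, ρ • 1, 1 / 2,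
    SampleIIOSSAux.posDef_smul_one one_pos, SampleIIOSSAux.posDef_smul_one hβpos,
    SampleIIOSSAux.posSemidef_smul_one hqpos.le, SampleIIOSSAux.posSemidef_smul_one hρpos.le,
    by norm_num, by norm_num, ?_⟩
  intro x xt u w wt hx hxt t i
  have he : ∀ s : ℕ, (x (s + 1) - xt (s + 1))
      = A.mulVec (x s - xt s) + (w s - wt s) := by
    intro s
    rw [hx s, hxt s]
    have : A.mulVec (x s - xt s) = A.mulVec (x s) - A.mulVec (xt s) :=
      map_sub A.mulVecLin (x s) (xt s)
    rw [this]
    abel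
  have Hinst := H (fun s => x s - xt s) (fun s => w s - wt s) he t i
  simp only [SampleIIOSSAux.sqv] at Hinst
  have houtput : ∀ j : ℕ, (C.mulVec (x j) + D.mulVec (u j))
      - (C.mulVec (xt j) + D.mulVec (u j)) = C.mulVec (x j - xt j) := by
    intro j
    have : C.mulVec (x j - xt j) = C.mulVec (x j) - C.mulVec (xt j) :=
      map_sub C.mulVecLin (x j) (xt j)
    rw [this]
    abel
  simp only [SampleIIOSSAux.normSq_smul_one, houtput, one_mul]
  exact Hinst

end
end

section
/- Let A ∈ ℝ^{n×n}, C ∈ ℝ^{p×n} and T ∈ ℕ be fixed. Then there exists a constant ᾱ > 0 such that for every nonempty subset S ⊆ {0, 1, …, T} for which the stacked matrix with block rows C A^{s}, s ∈ S, has full column rank n, there exist matrices α_s ∈ ℝ^{p×p}, s ∈ S, with ‖α_s‖ ≤ ᾱ for all s ∈ S and C A^{T+1} = Σ_{s∈S} α_s C A^{s}. -/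
open scoped Classical

noncomputable section

/-- Frobenius norm of a real matrix (a fixed choice of matrix norm). -/
def matNorm {p : ℕ} (M : Matrix (Fin p) (Fin p) ℝ) : ℝ :=
  Real.sqrt (∑ i, ∑ j, M i j ^ 2)

lemma matNorm_nonneg {p : ℕ} (M : Matrix (Fin p) (Fin p) ℝ) : 0 ≤ matNorm M :=
  Real.sqrt_nonneg _

lemma exists_alpha (n p T : ℕ) (A : Matrix (Fin n) (Fin n) ℝ) (C : Matrix (Fin p) (Fin n) ℝ)
    (S : Finset ℕ)
    (hr : (Matrix.of fun (ri : S × Fin p) (j : Fin n) =>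
          (C * A ^ (ri.1 : ℕ)) ri.2 j).rank = n) :
    ∃ α : ℕ → Matrix (Fin p) (Fin p) ℝ,
      C * A ^ (T + 1) = ∑ s ∈ S, α s * (C * A ^ s) := by
  set M : Matrix (S × Fin p) (Fin n) ℝ :=
    Matrix.of fun (ri : S × Fin p) (j : Fin n) => (C * A ^ (ri.1 : ℕ)) ri.2 j with hM
  have hrT : M.transpose.rank = n := by rw [Matrix.rank_transpose]; exact hr
  have hsurj : Function.Surjective M.transpose.mulVecLin := by
    rw [← LinearMap.range_eq_top]
    apply Submodule.eq_top_of_finrank_eq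
    rw [← Matrix.rank]  -- rank = finrank range mulVecLin
    simp [hrT]
  -- for each i, find x with M.transpose.mulVec x = (C*A^(T+1)) i
  choose x hx using fun i : Fin p => hsurj ((C * A ^ (T + 1)) i)
  refine ⟨fun s => Matrix.of fun i k =>
      if h : s ∈ S then x i (⟨s, h⟩, k) else 0, ?_⟩
  ext i j
  have h1 : (C * A ^ (T + 1)) i j = M.transpose.mulVecLin (x i) j := by rw [hx i]
  rw [h1]
  simp only [Matrix.mulVecLin_apply, Matrix.mulVec, dotProduct,
    Matrix.transpose_apply, Finset.sum_apply, Matrix.sum_apply]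
  rw [Fintype.sum_prod_type]
  rw [← Finset.sum_attach S (fun c => ((Matrix.of fun i k =>
      if h : c ∈ S then x i (⟨c, h⟩, k) else 0 : Matrix (Fin p) (Fin p) ℝ) * (C * A ^ c)) i j)]
  rw [Finset.univ_eq_attach]
  refine Finset.sum_congr rfl fun c _ => ?_
  simp only [Matrix.mul_apply, Matrix.of_apply, dif_pos c.2]
  refine Finset.sum_congr rfl fun k _ => ?_
  rw [mul_comm]
  rfl


/-- For fixed `A, C, T`, there is a uniform constant `ᾱ > 0` such that for
every nonempty subset `S ⊆ {0,…,T}` whose stacked matrix (block rows `C A^s`, `s ∈ S`)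
has full column rank `n`, there exist coefficient matrices `α_s` with `‖α_s‖ ≤ ᾱ` and
`C A^{T+1} = Σ_{s ∈ S} α_s C A^s`. -/
theorem uniformly_bounded_row_combinations
    (n p T : ℕ) (A : Matrix (Fin n) (Fin n) ℝ) (C : Matrix (Fin p) (Fin n) ℝ) :
    ∃ αbar : ℝ, 0 < αbar ∧
      ∀ S : Finset ℕ, S.Nonempty → S ⊆ Finset.range (T + 1) →
        (Matrix.of fun (ri : S × Fin p) (j : Fin n) =>
          (C * A ^ (ri.1 : ℕ)) ri.2 j).rank = n →
        ∃ α : ℕ → Matrix (Fin p) (Fin p) ℝ,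
          (∀ s ∈ S, matNorm (α s) ≤ αbar) ∧
          C * A ^ (T + 1) = ∑ s ∈ S, α s * (C * A ^ s) := by
  set F : Finset ℕ → ℕ → Matrix (Fin p) (Fin p) ℝ := fun S =>
    if h : ∃ α : ℕ → Matrix (Fin p) (Fin p) ℝ,
        C * A ^ (T + 1) = ∑ s ∈ S, α s * (C * A ^ s)
    then Classical.choose h else fun _ => 0 with hF
  refine ⟨1 + ∑ S ∈ (Finset.range (T + 1)).powerset, ∑ s ∈ S, matNorm (F S s), ?_, ?_⟩
  · have : 0 ≤ ∑ S ∈ (Finset.range (T + 1)).powerset, ∑ s ∈ S, matNorm (F S s) :=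
      Finset.sum_nonneg fun S _ => Finset.sum_nonneg fun s _ => matNorm_nonneg _
    linarith
  · intro S _ hSsub hrank
    have hex := exists_alpha n p T A C S hrank
    refine ⟨F S, ?_, ?_⟩
    · intro s hs
      have h1 : matNorm (F S s) ≤ ∑ s ∈ S, matNorm (F S s) :=
        Finset.single_le_sum (fun t _ => matNorm_nonneg _) hs
      have h2 : ∑ s ∈ S, matNorm (F S s) ≤
          ∑ S' ∈ (Finset.range (T + 1)).powerset, ∑ s ∈ S', matNorm (F S' s) :=
        Finset.single_le_sum (f := fun S' => ∑ s ∈ S', matNorm (F S' s))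
          (fun S' _ => Finset.sum_nonneg fun s _ => matNorm_nonneg _)
          (Finset.mem_powerset.mpr hSsub)
      linarith
    · rw [hF]
      simp only [dif_pos hex]
      exact Classical.choose_spec hex
end
end

section
/- Let ρ ∈ [0,1), c ≥ 0, W_0 ≥ 0, let M ≥ 1 be an integer, and let V, s : ℕ → ℝ_{≥0} be nonnegative sequences. Suppose: (i) for every t with 0 ≤ t < M, V_t ≤ c (ρ^t W_0 + Σ_{j=0}^{t−1} ρ^{t−j−1} s_j); and (ii) for every t ≥ M there exists an integer m_t with M ≤ m_t ≤ t such that V_t ≤ ρ^{m_t} V_{t−m_t} + Σ_{j=t−m_t}^{t−1} ρ^{t−j−1} s_j. If additionally c ≥ 1, then for all t ≥ 0: V_t ≤ c (ρ^t W_0 + Σ_{j=0}^{t−1} ρ^{t−j−1} s_j). -/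
/-- Recursive contraction argument: a per-window moving-horizon bound
(valid on windows of length at least `M`) together with an initial-phase bound propagates
to a global exponential bound (empty sums are zero). -/
theorem window_contraction_to_global_bound
    (ρ c W0 : ℝ) (hρ0 : 0 ≤ ρ) (hρ1 : ρ < 1) (hW0 : 0 ≤ W0)
    (M : ℕ) (hM : 1 ≤ M)
    (V s : ℕ → ℝ) (hV : ∀ t, 0 ≤ V t) (hs : ∀ t, 0 ≤ s t)
    (hinit : ∀ t, t < M →
      V t ≤ c * (ρ ^ t * W0 + ∑ j ∈ Finset.range t, ρ ^ (t - j - 1) * s j))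
    (hwin : ∀ t, M ≤ t → ∃ mt : ℕ, M ≤ mt ∧ mt ≤ t ∧
      V t ≤ ρ ^ mt * V (t - mt) + ∑ j ∈ Finset.Ico (t - mt) t, ρ ^ (t - j - 1) * s j)
    (hc : 1 ≤ c) :
    ∀ t, V t ≤ c * (ρ ^ t * W0 + ∑ j ∈ Finset.range t, ρ ^ (t - j - 1) * s j) := by
  intro t
  induction t using Nat.strong_induction_on with
  | _ t ih =>
    by_cases ht : t < M
    · exact hinit t ht
    · push_neg at ht
      obtain ⟨m, hMm, hmt, hVb⟩ := hwin t ht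
      have hts : t - m < t := Nat.sub_lt (by omega) (by omega)
      have IH := ih (t - m) hts
      have hρpow : (0:ℝ) ≤ ρ ^ m := pow_nonneg hρ0 m
      have hsplit : (∑ j ∈ Finset.range t, ρ ^ (t - j - 1) * s j)
          = (∑ j ∈ Finset.range (t - m), ρ ^ (t - j - 1) * s j)
            + ∑ j ∈ Finset.Ico (t - m) t, ρ ^ (t - j - 1) * s j := by
        rw [Finset.range_eq_Ico, ← Finset.sum_Ico_consecutive _ (Nat.zero_le _) (Nat.sub_le t m), Finset.range_eq_Ico]
      have hkey : ρ ^ m * ∑ j ∈ Finset.range (t - m), ρ ^ (t - m - j - 1) * s j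
          = ∑ j ∈ Finset.range (t - m), ρ ^ (t - j - 1) * s j := by
        rw [Finset.mul_sum]
        apply Finset.sum_congr rfl
        intro j hj
        simp only [Finset.mem_range] at hj
        rw [← mul_assoc, ← pow_add]
        congr 2
        omega
      have hpowt : ρ ^ m * ρ ^ (t - m) = ρ ^ t := by
        rw [← pow_add]; congr 1; omega
      have hS1 : (0:ℝ) ≤ ∑ j ∈ Finset.range (t - m), ρ ^ (t - j - 1) * s j :=
        Finset.sum_nonneg fun j _ => mul_nonneg (pow_nonneg hρ0 _) (hs j)
      have hS2 : (0:ℝ) ≤ ∑ j ∈ Finset.Ico (t - m) t, ρ ^ (t - j - 1) * s j :=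
        Finset.sum_nonneg fun j _ => mul_nonneg (pow_nonneg hρ0 _) (hs j)
      calc V t ≤ ρ ^ m * V (t - m) + ∑ j ∈ Finset.Ico (t - m) t, ρ ^ (t - j - 1) * s j := hVb
        _ ≤ ρ ^ m * (c * (ρ ^ (t - m) * W0
              + ∑ j ∈ Finset.range (t - m), ρ ^ (t - m - j - 1) * s j))
            + ∑ j ∈ Finset.Ico (t - m) t, ρ ^ (t - j - 1) * s j := by gcongr
        _ = c * (ρ ^ t * W0 + ∑ j ∈ Finset.range (t - m), ρ ^ (t - j - 1) * s j)
            + ∑ j ∈ Finset.Ico (t - m) t, ρ ^ (t - j - 1) * s j := by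
            rw [← hpowt, ← hkey]; ring
        _ ≤ c * (ρ ^ t * W0 + ∑ j ∈ Finset.range t, ρ ^ (t - j - 1) * s j) := by
            rw [hsplit]
            nlinarith [mul_nonneg (mul_nonneg hρpow (pow_nonneg hρ0 (t - m))) hW0]
end

section
/- Let η ∈ [0,1) and let a, c : ℕ → ℝ_{≥0} be nonnegative sequences and b ≥ 0 a constant such that for all t ≥ 0: a_t ≤ b η^t + Σ_{j=0}^{t−1} η^{t−j−1} c_j. Then for every μ ∈ (η, 1) there exists a constant κ > 0 (depending only on η and μ) such that for all t ≥ 0: a_t ≤ max{ κ b μ^t, max_{j ∈ [0,t−1]} κ c_j μ^{t−j−1} }. Conversely, if a_t ≤ max{ b μ^t, max_{j ∈ [0,t−1]} c_j μ^{t−j−1} } for all t, then a_t ≤ b μ^t + Σ_{j=0}^{t−1} μ^{t−j−1} c_j for all t. Hence the sum-based and max-based formulations of exponentially discounted bounds are equivalent up to adjustment of the constants and decay rate. -/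
noncomputable section

/-- Maximum of `g` over a finite index set (zero if the set is empty). -/
def maxOver (s : Finset ℕ) (g : ℕ → ℝ) : ℝ := s.fold max 0 g

lemma maxOver_nonneg (s : Finset ℕ) (g : ℕ → ℝ) : 0 ≤ maxOver s g := by
  unfold maxOver
  rw [Finset.le_fold_max]
  exact Or.inl le_rfl

lemma le_maxOver {s : Finset ℕ} {g : ℕ → ℝ} {j : ℕ} (hj : j ∈ s) : g j ≤ maxOver s g := by
  unfold maxOver
  rw [Finset.le_fold_max]
  exact Or.inr ⟨j, hj, le_rfl⟩

lemma maxOver_le {s : Finset ℕ} {g : ℕ → ℝ} {x : ℝ} (hx : 0 ≤ x)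
    (h : ∀ j ∈ s, g j ≤ x) : maxOver s g ≤ x := by
  unfold maxOver
  rw [Finset.fold_max_le]
  exact ⟨hx, h⟩

lemma maxOver_const_mul (s : Finset ℕ) (g : ℕ → ℝ) {κ : ℝ} (hκ : 0 ≤ κ) :
    maxOver s (fun j => κ * g j) = κ * maxOver s g := by
  unfold maxOver
  induction s using Finset.induction with
  | empty => simp
  | @insert a s h ih =>
      rw [Finset.fold_insert h, Finset.fold_insert h, ih, mul_max_of_nonneg _ _ hκ]

/-- Equivalence of the sum-based and max-based formulations of
exponentially discounted bounds, up to adjustment of the constants and decay rate: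
if `a_t ≤ b η^t + Σ_{j<t} η^{t-j-1} c_j` for all `t`, then for every `μ ∈ (η, 1)` there is
`κ > 0` (depending only on `η` and `μ`) with
`a_t ≤ max (κ b μ^t) (max_{j<t} κ c_j μ^{t-j-1})`; conversely, a max-based bound with
rate `μ` implies the corresponding sum-based bound with rate `μ`. -/
theorem sum_max_discounted_equivalence
    (η : ℝ) (hη0 : 0 ≤ η) (hη1 : η < 1)
    (a c : ℕ → ℝ) (ha : ∀ t, 0 ≤ a t) (hc : ∀ j, 0 ≤ c j)
    (b : ℝ) (hb : 0 ≤ b) :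
    ∀ μ : ℝ, η < μ → μ < 1 →
      ((∀ t, a t ≤ b * η ^ t + ∑ j ∈ Finset.range t, η ^ (t - j - 1) * c j) →
        ∃ κ : ℝ, 0 < κ ∧
          ∀ t, a t ≤ max (κ * b * μ ^ t)
            (maxOver (Finset.range t) fun j => κ * c j * μ ^ (t - j - 1)))
      ∧ ((∀ t, a t ≤ max (b * μ ^ t)
            (maxOver (Finset.range t) fun j => c j * μ ^ (t - j - 1))) →
          ∀ t, a t ≤ b * μ ^ t + ∑ j ∈ Finset.range t, μ ^ (t - j - 1) * c j) := by
  intro μ hημ hμ1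
  have hμ0 : 0 < μ := lt_of_le_of_lt hη0 hημ
  set r : ℝ := η / μ with hr
  have hr0 : 0 ≤ r := div_nonneg hη0 hμ0.le
  have hr1 : r < 1 := (div_lt_one hμ0).mpr hημ
  have h1r : 0 < 1 - r := by linarith
  have hrμ : η = r * μ := by rw [hr, div_mul_cancel₀ η hμ0.ne']
  constructor
  · intro H
    set κ : ℝ := 2 / (1 - r) with hκdef
    have hκ0 : 0 < κ := by positivity
    have hκ2 : 2 ≤ κ := by
      rw [hκdef, le_div_iff₀ h1r]
      nlinarith
    refine ⟨κ, hκ0, fun t => ?_⟩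
    set M : ℝ := maxOver (Finset.range t) (fun j => c j * μ ^ (t - j - 1)) with hM
    have hM0 : 0 ≤ M := maxOver_nonneg _ _
    have hmax : (maxOver (Finset.range t) fun j => κ * c j * μ ^ (t - j - 1)) = κ * M := by
      rw [hM, ← maxOver_const_mul _ _ hκ0.le]
      congr 1
      funext j
      ring
    rw [hmax]
    -- bound the sum term
    have hsum : (∑ j ∈ Finset.range t, η ^ (t - j - 1) * c j)
        ≤ (∑ j ∈ Finset.range t, r ^ (t - j - 1)) * M := by
      rw [Finset.sum_mul]
      apply Finset.sum_le_sum
      intro j hj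
      have h1 : c j * μ ^ (t - j - 1) ≤ M :=
        le_maxOver (g := fun j => c j * μ ^ (t - j - 1)) hj
      have : η ^ (t - j - 1) * c j = r ^ (t - j - 1) * (c j * μ ^ (t - j - 1)) := by
        rw [hrμ, mul_pow]; ring
      rw [this]
      exact mul_le_mul_of_nonneg_left h1 (by positivity)
    have hgeom : (∑ j ∈ Finset.range t, r ^ (t - j - 1)) ≤ 1 / (1 - r) := by
      have hre : (∑ j ∈ Finset.range t, r ^ (t - j - 1))
          = ∑ k ∈ Finset.range t, r ^ k := by
        rw [← Finset.sum_range_reflect (fun k => r ^ k) t]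
        apply Finset.sum_congr rfl
        intro j hj
        congr 1
        omega
      rw [hre, le_div_iff₀ h1r]
      have := geom_sum_mul r t
      have hrt : 0 ≤ r ^ t := by positivity
      nlinarith [this, hrt]
    have hb1 : b * η ^ t ≤ b * μ ^ t :=
      mul_le_mul_of_nonneg_left (pow_le_pow_left₀ hη0 hημ.le t) hb
    have key : a t ≤ b * μ ^ t + M / (1 - r) := by
      have := H t
      have h2 : (∑ j ∈ Finset.range t, r ^ (t - j - 1)) * M ≤ (1 / (1 - r)) * M :=
        mul_le_mul_of_nonneg_right hgeom hM0
      have heq : (1 / (1 - r)) * M = M / (1 - r) := by ring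
      linarith
    have hbm : 0 ≤ b * μ ^ t := mul_nonneg hb (by positivity)
    have hMd : 0 ≤ M / (1 - r) := div_nonneg hM0 h1r.le
    rcases le_total (b * μ ^ t) (M / (1 - r)) with h | h
    · apply le_max_of_le_right
      have : κ * M = 2 * (M / (1 - r)) := by
        rw [hκdef]; field_simp
      rw [this]
      linarith
    · apply le_max_of_le_left
      have h3 : 2 * (b * μ ^ t) ≤ κ * b * μ ^ t := by nlinarith
      linarith
  · intro H t
    have hsumnn : 0 ≤ ∑ j ∈ Finset.range t, μ ^ (t - j - 1) * c j :=
      Finset.sum_nonneg fun j _ => mul_nonneg (by positivity) (hc j)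
    refine (H t).trans (max_le ?_ ?_)
    · linarith
    · apply maxOver_le (add_nonneg (mul_nonneg hb (by positivity)) hsumnn)
      intro j hj
      have : c j * μ ^ (t - j - 1) = μ ^ (t - j - 1) * c j := by ring
      rw [this]
      have := Finset.single_le_sum (f := fun j => μ ^ (t - j - 1) * c j)
        (fun i _ => mul_nonneg (by positivity) (hc i)) hj
      have hbm2 : (0:ℝ) ≤ b * μ ^ t := mul_nonneg hb (by positivity)
      linarith
end
end
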